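/- arXiv:0908.4352 — 5 statements merged into one kernel-verified Lean document; each statement's English description precedes it below -/
import Mathlib

section
/- Let p be a symmetric matrix polynomial in g noncommuting variables with p(0) invertible, and suppose 𝒟_p(n) (the connected component of 0 of {X ∈ 𝕊ₙ(ℝ)^g : p(X) invertible}) is convex for all n. If X ∈ 𝕊ₙ(ℝ)^g, Y ∈ 𝕊ₘ(ℝ)^g, and the direct sum X ⊕ Y lies in 𝒟_p(n+m), then X ∈ 𝒟_p(n) and Y ∈ 𝒟_p(m). -/
open Matrix
open scoped Matrix.Norms.L2Operator

noncomputable section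

/-- A `g`-tuple of `n × n` real matrices. -/
abbrev Tuple (g n : ℕ) := Fin g → Matrix (Fin n) (Fin n) ℝ

/-- Evaluation of a word `w` (of length `k`) in `g` noncommuting letters at the tuple `X`. -/
def wordEval {g n : ℕ} (X : Tuple g n) {k : ℕ} (w : Fin k → Fin g) :
    Matrix (Fin n) (Fin n) ℝ :=
  (List.ofFn fun i => X (w i)).prod

/-- A `δ × δ` matrix noncommutative polynomial in `g` variables of degree at most `d`,
given by its matrix coefficients indexed by words. -/
structure NCPoly (g d δ : ℕ) where
  coeff : ∀ k : ℕ, (Fin k → Fin g) → Matrix (Fin δ) (Fin δ) ℝ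

/-- Evaluation `p(X) = Σ_{|w| ≤ d} p_w ⊗ w(X)`. -/
def NCPoly.eval {g d δ : ℕ} (p : NCPoly g d δ) {n : ℕ} (X : Tuple g n) :
    Matrix (Fin δ × Fin n) (Fin δ × Fin n) ℝ :=
  ∑ k ∈ Finset.range (d + 1), ∑ w : Fin k → Fin g,
    Matrix.kroneckerMap (· * ·) (p.coeff k w) (wordEval X w)

/-- `p(0)`, the constant coefficient of `p`. -/
def NCPoly.constantCoeff {g d δ : ℕ} (p : NCPoly g d δ) : Matrix (Fin δ) (Fin δ) ℝ :=
  p.coeff 0 finZeroElim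

/-- `p` takes symmetric values at tuples of symmetric matrices. -/
def NCPoly.IsSymmPoly {g d δ : ℕ} (p : NCPoly g d δ) : Prop :=
  ∀ (n : ℕ) (X : Tuple g n), (∀ j, (X j).IsSymm) → (p.eval X).IsSymm

/-- The invertibility set `ℑ_p(n)` inside the symmetric tuples. -/
def invSet {g d δ : ℕ} (p : NCPoly g d δ) (n : ℕ) : Set (Tuple g n) :=
  {X | (∀ j, (X j).IsSymm) ∧ IsUnit (p.eval X)}

/-- `𝒟_p(n)`, the connected component of `0` of the invertibility set. -/
def Dset {g d δ : ℕ} (p : NCPoly g d δ) (n : ℕ) : Set (Tuple g n) :=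
  connectedComponentIn (invSet p n) 0

/-- Direct sum of tuples. -/
def dsum {g n m : ℕ} (X : Tuple g n) (Y : Tuple g m) : Tuple g (n + m) :=
  fun j => Matrix.reindex finSumFinEquiv finSumFinEquiv (Matrix.fromBlocks (X j) 0 0 (Y j))


/-- `wordEval` of the zero tuple vanishes for nonempty words. -/
lemma wordEval_zero {g n : ℕ} {k : ℕ} (w : Fin k → Fin g) (hk : k ≠ 0) :
    wordEval (0 : Tuple g n) w = 0 := by
  cases k with
  | zero => exact absurd rfl hk
  | succ k =>
    rw [wordEval, List.ofFn_succ, List.prod_cons]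
    simp

lemma wordEval_dsum {g n m : ℕ} (X : Tuple g n) (Y : Tuple g m) {k : ℕ} (w : Fin k → Fin g) :
    wordEval (dsum X Y) w =
      Matrix.reindex finSumFinEquiv finSumFinEquiv
        (Matrix.fromBlocks (wordEval X w) 0 0 (wordEval Y w)) := by
  induction k with
  | zero =>
    simp [wordEval, Matrix.fromBlocks_one, Matrix.reindex_apply, Matrix.submatrix_one_equiv]
  | succ k ih =>
    rw [wordEval, List.ofFn_succ, List.prod_cons]
    rw [show ((List.ofFn fun i => dsum X Y (w i.succ)).prod) = wordEval (dsum X Y) (w ∘ Fin.succ) from rfl,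
      ih (w ∘ Fin.succ)]
    rw [show dsum X Y (w 0) = Matrix.reindex finSumFinEquiv finSumFinEquiv
        (Matrix.fromBlocks (X (w 0)) 0 0 (Y (w 0))) from rfl]
    simp only [Matrix.reindex_apply, Matrix.submatrix_mul_equiv, Matrix.fromBlocks_multiply]
    have hX : wordEval X w = X (w 0) * wordEval X (w ∘ Fin.succ) := by
      rw [wordEval, List.ofFn_succ, List.prod_cons]; rfl
    have hY : wordEval Y w = Y (w 0) * wordEval Y (w ∘ Fin.succ) := by
      rw [wordEval, List.ofFn_succ, List.prod_cons]; rfl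
    rw [hX, hY]
    simp [wordEval]

lemma kron_fromBlocks {δ n m : ℕ} (C : Matrix (Fin δ) (Fin δ) ℝ)
    (A : Matrix (Fin n) (Fin n) ℝ) (B : Matrix (Fin m) (Fin m) ℝ) :
    Matrix.kroneckerMap (· * ·) C (Matrix.fromBlocks A 0 0 B) =
      Matrix.reindex (Equiv.prodSumDistrib (Fin δ) (Fin n) (Fin m)).symm
        (Equiv.prodSumDistrib (Fin δ) (Fin n) (Fin m)).symm
        (Matrix.fromBlocks (Matrix.kroneckerMap (· * ·) C A) 0 0
          (Matrix.kroneckerMap (· * ·) C B)) := by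
  ext ⟨i, a⟩ ⟨j, b⟩
  rcases a with a | a <;> rcases b with b | b <;>
    simp [Matrix.kroneckerMap, Matrix.fromBlocks, Equiv.prodSumDistrib]

/-- The index equivalence for direct sums under the Kronecker structure. -/
def E (δ n m : ℕ) : (Fin δ × Fin n) ⊕ (Fin δ × Fin m) ≃ Fin δ × Fin (n + m) :=
  (Equiv.prodSumDistrib (Fin δ) (Fin n) (Fin m)).symm.trans
    ((Equiv.refl (Fin δ)).prodCongr finSumFinEquiv)

lemma eval_dsum {g d δ n m : ℕ} (p : NCPoly g d δ) (X : Tuple g n) (Y : Tuple g m) :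
    p.eval (dsum X Y) =
       Matrix.reindex (E δ n m) (E δ n m)
        (Matrix.fromBlocks (p.eval X) 0 0 (p.eval Y)) := by
  unfold NCPoly.eval
  have key : ∀ (k : ℕ) (w : Fin k → Fin g),
      Matrix.kroneckerMap (· * ·) (p.coeff k w) (wordEval (dsum X Y) w) =
        Matrix.reindex (E δ n m) (E δ n m)
          (Matrix.fromBlocks (Matrix.kroneckerMap (· * ·) (p.coeff k w) (wordEval X w)) 0 0
            (Matrix.kroneckerMap (· * ·) (p.coeff k w) (wordEval Y w))) := by
    intro k w
    rw [wordEval_dsum, Matrix.kroneckerMap_reindex_right, kron_fromBlocks]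
    rw [Matrix.reindex_apply, Matrix.reindex_apply, Matrix.submatrix_submatrix,
      Matrix.reindex_apply]
    rfl
  simp only [key]
  ext z z'
  simp only [Matrix.reindex_apply, Matrix.submatrix_apply, Matrix.sum_apply]
  rcases h : (E δ n m).symm z with c | c <;> rcases h' : (E δ n m).symm z' with c' | c' <;>
    simp only [Matrix.fromBlocks_apply₁₁, Matrix.fromBlocks_apply₁₂, Matrix.fromBlocks_apply₂₁,
      Matrix.fromBlocks_apply₂₂, Matrix.sum_apply, Matrix.zero_apply, Finset.sum_const_zero]

lemma isUnit_of_eval_dsum {g d δ n m : ℕ} (p : NCPoly g d δ) (X : Tuple g n) (Y : Tuple g m)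
    (h : IsUnit (p.eval (dsum X Y))) : IsUnit (p.eval X) ∧ IsUnit (p.eval Y) := by
  rw [Matrix.isUnit_iff_isUnit_det] at h
  rw [eval_dsum, Matrix.reindex_apply, Matrix.det_submatrix_equiv_self,
    Matrix.det_fromBlocks_zero₂₁] at h
  exact ⟨Matrix.isUnit_iff_isUnit_det _ |>.2 (isUnit_of_mul_isUnit_left h),
    Matrix.isUnit_iff_isUnit_det _ |>.2 (isUnit_of_mul_isUnit_right h)⟩

lemma isSymm_of_dsum {g n m : ℕ} (X : Tuple g n) (Y : Tuple g m) (j : Fin g)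
    (h : (dsum X Y j).IsSymm) : (X j).IsSymm ∧ (Y j).IsSymm := by
  have h2 := h.submatrix finSumFinEquiv
  rw [dsum, Matrix.reindex_apply, Matrix.submatrix_submatrix] at h2
  simp only [Equiv.symm_comp_self, Matrix.submatrix_id_id] at h2
  have := Matrix.isSymm_fromBlocks_iff.1 h2
  exact ⟨this.1, this.2.2.2⟩

lemma isUnit_eval_zero {g d δ : ℕ} (p : NCPoly g d δ) (h0 : IsUnit p.constantCoeff) (n : ℕ) :
    IsUnit (p.eval (0 : Tuple g n)) := by
  have he : p.eval (0 : Tuple g n) =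
      Matrix.kroneckerMap (· * ·) p.constantCoeff (1 : Matrix (Fin n) (Fin n) ℝ) := by
    rw [NCPoly.eval, Finset.sum_eq_single_of_mem 0 (Finset.mem_range.2 (Nat.succ_pos d))]
    · rw [Fintype.sum_unique]
      have hd : (default : Fin 0 → Fin g) = finZeroElim := by funext x; exact x.elim0
      have h1 : wordEval (0 : Tuple g n) (default : Fin 0 → Fin g) = 1 := by
        simp [wordEval]
      rw [h1, hd]
      rfl
    · intro k _ hk
      apply Finset.sum_eq_zero
      intro w _
      rw [wordEval_zero w hk]
      ext ⟨i, a⟩ ⟨j, b⟩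
      simp [Matrix.kroneckerMap]
  rw [he, Matrix.isUnit_iff_isUnit_det]
  rw [Matrix.det_kronecker]
  simp only [Matrix.det_one, one_pow, mul_one]
  exact (Matrix.isUnit_iff_isUnit_det _ |>.1 h0).pow _

lemma dsum_smul {g n m : ℕ} (X : Tuple g n) (Y : Tuple g m) (t : ℝ) :
    t • dsum X Y = dsum (t • X) (t • Y) := by
  funext j
  ext a b
  simp only [dsum, Matrix.reindex_apply, Matrix.submatrix_apply, Pi.smul_apply,
    Matrix.smul_apply]
  rcases finSumFinEquiv.symm a with c | c <;> rcases finSumFinEquiv.symm b with c' | c' <;>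
    simp [Matrix.fromBlocks, smul_eq_mul]

lemma mem_Dset_of_segment {g d δ n : ℕ} (p : NCPoly g d δ) (X : Tuple g n)
    (h : ∀ t : ℝ, t ∈ Set.Icc (0 : ℝ) 1 → t • X ∈ invSet p n) : X ∈ Dset p n := by
  have hc : Continuous fun t : ℝ => t • X := continuous_id.smul continuous_const
  have hpre : IsPreconnected ((fun t : ℝ => t • X) '' Set.Icc 0 1) :=
    isPreconnected_Icc.image _ hc.continuousOn
  have h0 : (0 : Tuple g n) ∈ (fun t : ℝ => t • X) '' Set.Icc 0 1 :=
    ⟨0, ⟨le_refl 0, zero_le_one⟩, zero_smul ℝ X⟩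
  have hsub : ((fun t : ℝ => t • X) '' Set.Icc 0 1) ⊆ invSet p n := by
    rintro _ ⟨t, ht, rfl⟩; exact h t ht
  exact hpre.subset_connectedComponentIn h0 hsub
    ⟨1, ⟨zero_le_one, le_refl 1⟩, one_smul ℝ X⟩

/-- If `p` is a symmetric nc matrix polynomial with `p(0)` invertible and every `𝒟_p(n)` is
convex, then direct summands of members of `𝒟_p` are again in `𝒟_p`: `X ⊕ Y ∈ 𝒟_p(n+m)`
implies `X ∈ 𝒟_p(n)` and `Y ∈ 𝒟_p(m)`. -/
theorem dsum_mem_Dset_of_convex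
    {g d δ : ℕ} (p : NCPoly g d δ) (hsym : p.IsSymmPoly)
    (h0 : IsUnit p.constantCoeff)
    (hconv : ∀ n, Convex ℝ (Dset p n))
    {n m : ℕ} (X : Tuple g n) (Y : Tuple g m)
    (hXY : dsum X Y ∈ Dset p (n + m)) :
    X ∈ Dset p n ∧ Y ∈ Dset p m := by
  have h0mem : (0 : Tuple g (n + m)) ∈ invSet p (n + m) :=
    ⟨fun j => by simp [Matrix.IsSymm], isUnit_eval_zero p h0 _⟩
  have h0D : (0 : Tuple g (n + m)) ∈ Dset p (n + m) := mem_connectedComponentIn h0mem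
  have key : ∀ t : ℝ, t ∈ Set.Icc (0 : ℝ) 1 →
      dsum (t • X) (t • Y) ∈ invSet p (n + m) := by
    intro t ht
    have hmem : t • dsum X Y + (1 - t) • (0 : Tuple g (n + m)) ∈ Dset p (n + m) :=
      hconv (n + m) hXY h0D ht.1 (by linarith [ht.2]) (by ring)
    have : t • dsum X Y ∈ Dset p (n + m) := by simpa using hmem
    have hinv : t • dsum X Y ∈ invSet p (n + m) :=
      connectedComponentIn_subset _ _ this
    rwa [dsum_smul] at hinv
  constructor
  · apply mem_Dset_of_segment
    intro t ht
    obtain ⟨hs, hu⟩ := key t ht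
    exact ⟨fun j => (isSymm_of_dsum _ _ j (hs j)).1,
      (isUnit_of_eval_dsum p _ _ hu).1⟩
  · apply mem_Dset_of_segment
    intro t ht
    obtain ⟨hs, hu⟩ := key t ht
    exact ⟨fun j => (isSymm_of_dsum _ _ j (hs j)).2,
      (isUnit_of_eval_dsum p _ _ hu).2⟩
end
end

section
/- For any real n×n matrix C with ‖C‖ ≤ 1 (operator norm), the Julia matrix U = [[C, (I − CCᵀ)^{1/2}], [−(I − CᵀC)^{1/2}, Cᵀ]] of size 2n×2n is orthogonal (i.e., UᵀU = I = UUᵀ). -/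
open Matrix
open scoped Matrix.Norms.L2Operator

set_option maxHeartbeats 1000000

noncomputable section

/-- The square root of a positive semidefinite matrix, as defined in the older Mathlib
(`Matrix.PosSemidef.sqrt`, since removed). -/
def Matrix.PosSemidef.sqrt {n : Type*} [Fintype n] [DecidableEq n] {𝕜 : Type*} [RCLike 𝕜]
    [PartialOrder 𝕜] {A : Matrix n n 𝕜} (hA : A.PosSemidef) : Matrix n n 𝕜 :=
  hA.1.eigenvectorUnitary.1 * diagonal ((↑) ∘ (√·) ∘ hA.1.eigenvalues) *
    (star hA.1.eigenvectorUnitary : Matrix n n 𝕜)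

private lemma Matrix.PosSemidef.sqrt_mul_self {n : ℕ} {A : Matrix (Fin n) (Fin n) ℝ}
    (hA : A.PosSemidef) : hA.sqrt * hA.sqrt = A := by
  have hU : (star hA.1.eigenvectorUnitary : Matrix (Fin n) (Fin n) ℝ) *
      hA.1.eigenvectorUnitary.1 = 1 := Unitary.coe_star_mul_self _
  conv_rhs => rw [hA.1.spectral_theorem, Unitary.conjStarAlgAut_apply]
  simp only [Matrix.PosSemidef.sqrt]
  rw [show ∀ a b c d e f : Matrix (Fin n) (Fin n) ℝ, a * b * c * (d * e * f)
      = a * b * (c * d) * e * f from fun a b c d e f => by noncomm_ring, hU, Matrix.mul_one,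
    show ∀ a b c d : Matrix (Fin n) (Fin n) ℝ, a * b * c * d = a * (b * c) * d from
      fun a b c d => by noncomm_ring, diagonal_mul_diagonal]
  congr 3
  funext i
  simp [Real.mul_self_sqrt (hA.eigenvalues_nonneg i)]

private lemma Matrix.PosSemidef.posSemidef_sqrt {n : ℕ} {A : Matrix (Fin n) (Fin n) ℝ}
    (hA : A.PosSemidef) : hA.sqrt.PosSemidef := by
  simp only [Matrix.PosSemidef.sqrt, star_eq_conjTranspose]
  apply Matrix.PosSemidef.mul_mul_conjTranspose_same
  rw [posSemidef_diagonal_iff]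
  intro i
  simp [Real.sqrt_nonneg]

private lemma trace_transpose_mul_self_nonneg {n : ℕ} (A : Matrix (Fin n) (Fin n) ℝ) :
    0 ≤ (Aᵀ * A).trace := by
  rw [Matrix.trace]
  refine Finset.sum_nonneg fun j _ => ?_
  rw [Matrix.diag_apply, Matrix.mul_apply]
  exact Finset.sum_nonneg fun i _ => by
    rw [Matrix.transpose_apply]; exact mul_self_nonneg _

private lemma eq_zero_of_trace_transpose_mul_self {n : ℕ} (A : Matrix (Fin n) (Fin n) ℝ)
    (h : (Aᵀ * A).trace = 0) : A = 0 := by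
  rw [Matrix.trace] at h
  have h2 : ∀ j ∈ Finset.univ, ((Aᵀ * A).diag j) = 0 := by
    rw [← Finset.sum_eq_zero_iff_of_nonneg]
    · exact h
    · intro j _
      rw [Matrix.diag_apply, Matrix.mul_apply]
      exact Finset.sum_nonneg fun i _ => by
        rw [Matrix.transpose_apply]; exact mul_self_nonneg _
  ext i j
  have := h2 j (Finset.mem_univ j)
  rw [Matrix.diag_apply, Matrix.mul_apply] at this
  have h3 : ∀ i ∈ Finset.univ, Aᵀ j i * A i j = 0 := by
    rw [← Finset.sum_eq_zero_iff_of_nonneg]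
    · exact this
    · intro i _
      rw [Matrix.transpose_apply]; exact mul_self_nonneg _
  have := h3 i (Finset.mem_univ i)
  rw [Matrix.transpose_apply] at this
  simpa using mul_self_eq_zero.mp this

private lemma transpose_eq_of_isHermitian {n : ℕ} {A : Matrix (Fin n) (Fin n) ℝ}
    (hA : A.IsHermitian) : Aᵀ = A := by
  rw [← Matrix.conjTranspose_eq_transpose_of_trivial]; exact hA

/-- For a real contraction matrix `C` (i.e. `I − CᵀC ⪰ 0` and `I − CCᵀ ⪰ 0`, equivalently
`‖C‖ ≤ 1` in operator norm), the Julia matrix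
`U = [[C, (I − CCᵀ)^{1/2}], [−(I − CᵀC)^{1/2}, Cᵀ]]` is orthogonal: `UᵀU = I = UUᵀ`. -/
theorem julia_matrix_orthogonal {n : ℕ} (C : Matrix (Fin n) (Fin n) ℝ)
    (hC : ‖C‖ ≤ 1)
    (h1 : (1 - C * Cᵀ).PosSemidef) (h2 : (1 - Cᵀ * C).PosSemidef) :
    (Matrix.fromBlocks C h1.sqrt (-(h2.sqrt)) Cᵀ)ᵀ *
        (Matrix.fromBlocks C h1.sqrt (-(h2.sqrt)) Cᵀ) = 1 ∧
      (Matrix.fromBlocks C h1.sqrt (-(h2.sqrt)) Cᵀ) *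
        (Matrix.fromBlocks C h1.sqrt (-(h2.sqrt)) Cᵀ)ᵀ = 1 := by
  set T := h1.sqrt with hTdef
  set S := h2.sqrt with hSdef
  have hT2 : T * T = 1 - C * Cᵀ := h1.sqrt_mul_self
  have hS2 : S * S = 1 - Cᵀ * C := h2.sqrt_mul_self
  have hTpsd : T.PosSemidef := h1.posSemidef_sqrt
  have hSpsd : S.PosSemidef := h2.posSemidef_sqrt
  have hTt : Tᵀ = T := transpose_eq_of_isHermitian hTpsd.1
  have hSt : Sᵀ = S := transpose_eq_of_isHermitian hSpsd.1
  -- the intertwining identity C * S = T * C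
  set X := C * S - T * C with hXdef
  have key1 : T * X + X * S = 0 := by
    have e : T * (C * S - T * C) + (C * S - T * C) * S
        = C * (S * S) - (T * T) * C := by noncomm_ring
    rw [hXdef, e, hT2, hS2]
    noncomm_ring
  -- square roots of T and S
  set R := hTpsd.sqrt with hRdef
  set Q := hSpsd.sqrt with hQdef
  have hR2 : R * R = T := hTpsd.sqrt_mul_self
  have hQ2 : Q * Q = S := hSpsd.sqrt_mul_self
  have hRt : Rᵀ = R := transpose_eq_of_isHermitian hTpsd.posSemidef_sqrt.1
  have hQt : Qᵀ = Q := transpose_eq_of_isHermitian hSpsd.posSemidef_sqrt.1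
  have tr1 : ((R * X)ᵀ * (R * X)).trace + ((X * Q)ᵀ * (X * Q)).trace = 0 := by
    have e1 : (R * X)ᵀ * (R * X) = Xᵀ * (T * X) := by
      rw [Matrix.transpose_mul, hRt, ← hR2]; noncomm_ring
    have e2 : ((X * Q)ᵀ * (X * Q)).trace = (Xᵀ * (X * S)).trace := by
      have e3 : (X * Q)ᵀ * (X * Q) = Q * (Xᵀ * X * Q) := by
        rw [Matrix.transpose_mul, hQt]; noncomm_ring
      rw [e3, Matrix.trace_mul_comm,
        show Xᵀ * X * Q * Q = Xᵀ * (X * (Q * Q)) by noncomm_ring, hQ2]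
    rw [e1, e2, ← Matrix.trace_add, ← Matrix.mul_add, key1, Matrix.mul_zero,
      Matrix.trace_zero]
  have hRX : R * X = 0 := by
    apply eq_zero_of_trace_transpose_mul_self
    have a := trace_transpose_mul_self_nonneg (R * X)
    have b := trace_transpose_mul_self_nonneg (X * Q)
    linarith
  have hTX : T * X = 0 := by rw [← hR2, Matrix.mul_assoc, hRX, Matrix.mul_zero]
  have hXS : X * S = 0 := by
    have := key1; rw [hTX, zero_add] at this; exact this
  have hXtX : Xᵀ * X = S * (Cᵀ * X) := by
    rw [hXdef, Matrix.transpose_sub, Matrix.transpose_mul, Matrix.transpose_mul, hSt, hTt]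
    calc (S * Cᵀ - Cᵀ * T) * X = S * (Cᵀ * X) - Cᵀ * (T * X) := by noncomm_ring
      _ = S * (Cᵀ * X) := by rw [hTX, Matrix.mul_zero, sub_zero]
  have hsq : (Xᵀ * X) * (Xᵀ * X) = 0 := by
    rw [hXtX, show S * (Cᵀ * X) * (S * (Cᵀ * X)) = S * Cᵀ * (X * S) * (Cᵀ * X) by
      noncomm_ring, hXS]
    noncomm_ring
  have hXtX0 : Xᵀ * X = 0 := by
    have h' : (Xᵀ * X)ᴴ * (Xᵀ * X) = 0 := by
      rw [Matrix.conjTranspose_eq_transpose_of_trivial, Matrix.transpose_mul,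
        Matrix.transpose_transpose]
      calc Xᵀ * X * (Xᵀ * X) = (Xᵀ * X) * (Xᵀ * X) := by noncomm_ring
        _ = 0 := hsq
    exact Matrix.conjTranspose_mul_self_eq_zero.mp h'
  have hX0 : X = 0 := by
    have h' : Xᴴ * X = 0 := by
      rw [Matrix.conjTranspose_eq_transpose_of_trivial]; exact hXtX0
    exact Matrix.conjTranspose_mul_self_eq_zero.mp h'
  have hCS : C * S = T * C := by
    have := hX0; rw [hXdef, sub_eq_zero] at this; exact this
  have hSCt : S * Cᵀ = Cᵀ * T := by
    have := congrArg Matrix.transpose hCS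
    rw [Matrix.transpose_mul, Matrix.transpose_mul, hSt, hTt] at this
    exact this
  have b11 : Cᵀ * C + (-S)ᵀ * -S = 1 := by
    rw [Matrix.transpose_neg, hSt, Matrix.neg_mul, Matrix.mul_neg, neg_neg, hS2]
    noncomm_ring
  have b12 : Cᵀ * T + (-S)ᵀ * Cᵀ = 0 := by
    rw [Matrix.transpose_neg, hSt, Matrix.neg_mul, hSCt]; abel
  have b21 : Tᵀ * C + Cᵀᵀ * -S = 0 := by
    rw [hTt, Matrix.transpose_transpose, Matrix.mul_neg, ← hCS, hCS]; abel
  have b22 : Tᵀ * T + Cᵀᵀ * Cᵀ = 1 := by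
    rw [hTt, Matrix.transpose_transpose, hT2]; noncomm_ring
  have c11 : C * Cᵀ + T * Tᵀ = 1 := by
    rw [hTt, hT2]; noncomm_ring
  have c12 : C * (-S)ᵀ + T * Cᵀᵀ = 0 := by
    rw [Matrix.transpose_neg, hSt, Matrix.transpose_transpose, Matrix.mul_neg, hCS]
    abel
  have c21 : -S * Cᵀ + Cᵀ * Tᵀ = 0 := by
    rw [hTt, Matrix.neg_mul, hSCt]; abel
  have c22 : -S * (-S)ᵀ + Cᵀ * Cᵀᵀ = 1 := by
    rw [Matrix.transpose_neg, hSt, Matrix.transpose_transpose, Matrix.neg_mul,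
      Matrix.mul_neg, neg_neg, hS2]
    noncomm_ring
  constructor
  · rw [Matrix.fromBlocks_transpose, Matrix.fromBlocks_multiply, b11, b12, b21, b22,
      Matrix.fromBlocks_one]
  · rw [Matrix.fromBlocks_transpose, Matrix.fromBlocks_multiply, c11, c12, c21, c22,
      Matrix.fromBlocks_one]
end
end

section
/- Let p be a symmetric δ×δ nc polynomial of degree d satisfying p(0) invertible, 𝒟_p bounded, and each 𝒟_p(n) convex. Then 𝒟_p is an open matrix convex set: (i) each 𝒟_p(n) is open and contains 0; (ii) 𝒟_p respects direct sums; (iii) if X ∈ 𝒟_p(n) and F is an n×k real contraction, then (FᵀX₁F, …, FᵀX_gF) ∈ 𝒟_p(k); (iv) each 𝒟_p(n) is convex and bounded. -/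
open Matrix
open scoped Matrix.Norms.L2Operator

noncomputable section

open scoped Kronecker

namespace DsetAux

variable {g d δ : ℕ}

lemma wordEval_succ {n k : ℕ} (X : Tuple g n) (w : Fin (k + 1) → Fin g) :
    wordEval X w = X (w 0) * wordEval X (w ∘ Fin.succ) := by
  simp [wordEval, List.ofFn_succ, Function.comp]

lemma eval_eq (p : NCPoly g d δ) {n : ℕ} (X : Tuple g n) :
    p.eval X = ∑ k ∈ Finset.range (d + 1), ∑ w : Fin k → Fin g,
      (p.coeff k w) ⊗ₖ (wordEval X w) := rfl

lemma eval_zero (p : NCPoly g d δ) (n : ℕ) :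
    p.eval (0 : Tuple g n) = (p.constantCoeff) ⊗ₖ (1 : Matrix (Fin n) (Fin n) ℝ) := by
  rw [eval_eq, Finset.sum_eq_single 0]
  · have hw : ∀ w : Fin 0 → Fin g, w = finZeroElim := fun w => funext fun i => i.elim0
    rw [Fintype.sum_eq_single finZeroElim (fun w hw' => absurd (hw w) hw')]
    simp [wordEval, NCPoly.constantCoeff]
  · intro k hk hk0
    obtain ⟨k', rfl⟩ := Nat.exists_eq_succ_of_ne_zero hk0
    apply Finset.sum_eq_zero; intro w _
    rw [wordEval_succ]
    ext ⟨a, r⟩ ⟨b, s⟩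
    simp [Matrix.kroneckerMap_apply]
  · intro h; exact absurd (Finset.mem_range.2 (Nat.succ_pos d)) h

/-- the index equivalence used for direct sums -/
def blockEquiv (δ n m : ℕ) : (Fin δ × Fin n) ⊕ (Fin δ × Fin m) ≃ Fin δ × Fin (n + m) where
  toFun x := Sum.elim (fun y => (y.1, finSumFinEquiv (Sum.inl y.2)))
    (fun y => (y.1, finSumFinEquiv (Sum.inr y.2))) x
  invFun x := Sum.map (fun r => (x.1, r)) (fun r => (x.1, r)) (finSumFinEquiv.symm x.2)
  left_inv := by
    rintro (⟨a, r⟩ | ⟨a, r⟩) <;>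
      simp only [Sum.elim_inl, Sum.elim_inr, Equiv.symm_apply_apply, Sum.map_inl, Sum.map_inr]
  right_inv := by
    rintro ⟨a, r⟩
    rcases h : finSumFinEquiv.symm r with r' | r' <;>
      simp only [h, Sum.map_inl, Sum.map_inr, Sum.elim_inl, Sum.elim_inr] <;>
      rw [← h, Equiv.apply_symm_apply]

lemma blockEquiv_symm_apply {n m : ℕ} (a : Fin δ) (r : Fin (n + m)) :
    (blockEquiv δ n m).symm (a, r)
      = Sum.map (fun r' => (a, r')) (fun r' => (a, r')) (finSumFinEquiv.symm r) := rfl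

lemma wordEval_dsum {n m : ℕ} (X : Tuple g n) (Y : Tuple g m) :
    ∀ {k : ℕ} (w : Fin k → Fin g),
      wordEval (dsum X Y) w
        = (Matrix.fromBlocks (wordEval X w) 0 0 (wordEval Y w)).submatrix
            ⇑finSumFinEquiv.symm ⇑finSumFinEquiv.symm := by
  intro k
  induction k with
  | zero =>
      intro w
      simp only [wordEval, List.ofFn_zero, List.prod_nil]
      rw [Matrix.fromBlocks_one, Matrix.submatrix_one_equiv]
  | succ k ih =>
      intro w
      rw [wordEval_succ, wordEval_succ X, wordEval_succ Y, ih]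
      show (Matrix.reindex finSumFinEquiv finSumFinEquiv
          (Matrix.fromBlocks (X (w 0)) 0 0 (Y (w 0)))) * _ = _
      rw [Matrix.reindex_apply, Matrix.submatrix_mul_equiv, Matrix.fromBlocks_multiply]
      simp

lemma eval_dsum (p : NCPoly g d δ) {n m : ℕ} (X : Tuple g n) (Y : Tuple g m) :
    p.eval (dsum X Y)
      = (Matrix.fromBlocks (p.eval X) 0 0 (p.eval Y)).submatrix
          ⇑(blockEquiv δ n m).symm ⇑(blockEquiv δ n m).symm := by
  ext ⟨a, r⟩ ⟨b, s⟩
  rw [Matrix.submatrix_apply, blockEquiv_symm_apply, blockEquiv_symm_apply]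
  rcases hr : finSumFinEquiv.symm r with r' | r' <;>
    rcases hs : finSumFinEquiv.symm s with s' | s' <;>
    simp only [NCPoly.eval, Matrix.sum_apply, Matrix.kroneckerMap_apply, wordEval_dsum,
      Matrix.submatrix_apply, hr, hs, Sum.map_inl, Sum.map_inr,
      Matrix.fromBlocks_apply₁₁, Matrix.fromBlocks_apply₁₂, Matrix.fromBlocks_apply₂₁,
      Matrix.fromBlocks_apply₂₂, Matrix.zero_apply, mul_zero, Finset.sum_const_zero]

lemma isUnit_eval_dsum_iff (p : NCPoly g d δ) {n m : ℕ} (X : Tuple g n) (Y : Tuple g m) :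
    IsUnit (p.eval (dsum X Y)) ↔ IsUnit (p.eval X) ∧ IsUnit (p.eval Y) := by
  rw [eval_dsum, Matrix.isUnit_iff_isUnit_det,
    Matrix.det_submatrix_equiv_self (blockEquiv δ n m).symm,
    Matrix.det_fromBlocks_zero₂₁, IsUnit.mul_iff, ← Matrix.isUnit_iff_isUnit_det,
    ← Matrix.isUnit_iff_isUnit_det]

lemma dsum_isSymm {n m : ℕ} {X : Tuple g n} {Y : Tuple g m}
    (hX : ∀ j, (X j).IsSymm) (hY : ∀ j, (Y j).IsSymm) (j : Fin g) :
    ((dsum X Y) j).IsSymm := by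
  show _ = _
  rw [dsum, Matrix.reindex_apply, Matrix.transpose_submatrix, Matrix.fromBlocks_transpose]
  simp [(hX j).eq, (hY j).eq]

lemma dsum_isSymm_right {n m : ℕ} {X : Tuple g n} {Y : Tuple g m}
    (h : ∀ j, ((dsum X Y) j).IsSymm) (j : Fin g) : (Y j).IsSymm := by
  apply Matrix.IsSymm.ext
  intro i i'
  have := (h j).apply (finSumFinEquiv (Sum.inr i)) (finSumFinEquiv (Sum.inr i'))
  simpa [dsum, Matrix.reindex_apply, Matrix.submatrix_apply] using this

lemma invSet_zero (p : NCPoly g d δ) (h0 : IsUnit p.constantCoeff) (n : ℕ) :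
    (0 : Tuple g n) ∈ invSet p n := by
  refine ⟨fun j => Matrix.isSymm_zero, ?_⟩
  rw [eval_zero, Matrix.isUnit_iff_isUnit_det, Matrix.det_kronecker]
  exact (((Matrix.isUnit_iff_isUnit_det _).1 h0).pow _).mul (by simp)

lemma invSet_dsum (p : NCPoly g d δ) {n m : ℕ} {X : Tuple g n} {Y : Tuple g m}
    (hX : X ∈ invSet p n) (hY : Y ∈ invSet p m) : dsum X Y ∈ invSet p (n + m) :=
  ⟨dsum_isSymm hX.1 hY.1, (isUnit_eval_dsum_iff p X Y).2 ⟨hX.2, hY.2⟩⟩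

lemma invSet_dsum_right (p : NCPoly g d δ) {n m : ℕ} {X : Tuple g n} {Y : Tuple g m}
    (h : dsum X Y ∈ invSet p (n + m)) : Y ∈ invSet p m :=
  ⟨dsum_isSymm_right h.1, (((isUnit_eval_dsum_iff p X Y).1 h.2)).2⟩

lemma wordEval_conj {n : ℕ} (U : Matrix (Fin n) (Fin n) ℝ)
    (h1 : U * Uᵀ = 1) (h2 : Uᵀ * U = 1) (X : Tuple g n) :
    ∀ {k : ℕ} (w : Fin k → Fin g),
      wordEval (fun j => Uᵀ * X j * U) w = Uᵀ * wordEval X w * U := by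
  intro k
  induction k with
  | zero =>
      intro w
      simp only [wordEval, List.ofFn_zero, List.prod_nil, Matrix.mul_one, h2]
  | succ k ih =>
      intro w
      rw [wordEval_succ, wordEval_succ X, ih]
      calc Uᵀ * X (w 0) * U * (Uᵀ * wordEval X (w ∘ Fin.succ) * U)
          = Uᵀ * X (w 0) * (U * Uᵀ) * wordEval X (w ∘ Fin.succ) * U := by
            simp only [Matrix.mul_assoc]
        _ = Uᵀ * (X (w 0) * wordEval X (w ∘ Fin.succ)) * U := by
            rw [h1]; simp only [Matrix.mul_one, Matrix.mul_assoc]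

lemma eval_conj (p : NCPoly g d δ) {n : ℕ} (U : Matrix (Fin n) (Fin n) ℝ)
    (h1 : U * Uᵀ = 1) (h2 : Uᵀ * U = 1) (X : Tuple g n) :
    p.eval (fun j => Uᵀ * X j * U)
      = ((1 : Matrix (Fin δ) (Fin δ) ℝ) ⊗ₖ Uᵀ) * p.eval X
          * ((1 : Matrix (Fin δ) (Fin δ) ℝ) ⊗ₖ U) := by
  rw [eval_eq, eval_eq]
  have key : ∀ (k : ℕ) (w : Fin k → Fin g),
      (p.coeff k w) ⊗ₖ (Uᵀ * wordEval X w * U)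
        = ((1 : Matrix (Fin δ) (Fin δ) ℝ) ⊗ₖ Uᵀ)
            * (((p.coeff k w) ⊗ₖ (wordEval X w)) * ((1 : Matrix (Fin δ) (Fin δ) ℝ) ⊗ₖ U)) := by
    intro k w
    rw [← Matrix.mul_kronecker_mul, ← Matrix.mul_kronecker_mul]
    rw [Matrix.one_mul, Matrix.mul_one, Matrix.mul_assoc]
  simp only [wordEval_conj U h1 h2 X]
  simp only [key]
  simp only [Finset.mul_sum, Finset.sum_mul, Matrix.mul_assoc]

lemma invSet_conj (p : NCPoly g d δ) {n : ℕ} (U : Matrix (Fin n) (Fin n) ℝ)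
    (h1 : U * Uᵀ = 1) (h2 : Uᵀ * U = 1) {X : Tuple g n} (hX : X ∈ invSet p n) :
    (fun j => Uᵀ * X j * U) ∈ invSet p n := by
  constructor
  · intro j
    show _ = _
    simp [Matrix.transpose_mul, Matrix.mul_assoc, (hX.1 j).eq]
  · rw [eval_conj p U h1 h2]
    have hmul1 : ((1 : Matrix (Fin δ) (Fin δ) ℝ) ⊗ₖ Uᵀ) * ((1 : Matrix (Fin δ) (Fin δ) ℝ) ⊗ₖ U)
        = 1 := by
      rw [← Matrix.mul_kronecker_mul, Matrix.one_mul, h2, Matrix.one_kronecker_one]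
    have hmul2 : ((1 : Matrix (Fin δ) (Fin δ) ℝ) ⊗ₖ U) * ((1 : Matrix (Fin δ) (Fin δ) ℝ) ⊗ₖ Uᵀ)
        = 1 := by
      rw [← Matrix.mul_kronecker_mul, Matrix.one_mul, h1, Matrix.one_kronecker_one]
    have hu1 : IsUnit ((1 : Matrix (Fin δ) (Fin δ) ℝ) ⊗ₖ Uᵀ) :=
      ⟨⟨(1 : Matrix (Fin δ) (Fin δ) ℝ) ⊗ₖ Uᵀ, (1 : Matrix (Fin δ) (Fin δ) ℝ) ⊗ₖ U,
        hmul1, hmul2⟩, rfl⟩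
    have hu2 : IsUnit ((1 : Matrix (Fin δ) (Fin δ) ℝ) ⊗ₖ U) :=
      ⟨⟨(1 : Matrix (Fin δ) (Fin δ) ℝ) ⊗ₖ U, (1 : Matrix (Fin δ) (Fin δ) ℝ) ⊗ₖ Uᵀ,
        hmul2, hmul1⟩, rfl⟩
    exact (hu1.mul hX.2).mul hu2

lemma zero_mem_Dset (p : NCPoly g d δ) (h0 : IsUnit p.constantCoeff) (n : ℕ) :
    (0 : Tuple g n) ∈ Dset p n :=
  mem_connectedComponentIn (invSet_zero p h0 n)

lemma smul_mem_invSet (p : NCPoly g d δ) (h0 : IsUnit p.constantCoeff) {n : ℕ}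
    (hconv : Convex ℝ (Dset p n)) {X : Tuple g n} (hX : X ∈ Dset p n)
    {t : ℝ} (ht : t ∈ Set.Icc (0 : ℝ) 1) : t • X ∈ invSet p n := by
  have h1 : t • X ∈ Dset p n := by
    have := hconv hX (zero_mem_Dset p h0 n) ht.1 (sub_nonneg.2 ht.2) (by ring)
    simpa using this
  exact connectedComponentIn_subset _ _ h1

lemma mem_Dset_of_segment (p : NCPoly g d δ) {n : ℕ} {X : Tuple g n}
    (h : ∀ t : ℝ, t ∈ Set.Icc (0 : ℝ) 1 → t • X ∈ invSet p n) : X ∈ Dset p n := by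
  have hpre : IsPreconnected ((fun t : ℝ => t • X) '' Set.Icc 0 1) :=
    (isPreconnected_Icc).image _ (Continuous.continuousOn (by fun_prop))
  have hsub : (fun t : ℝ => t • X) '' Set.Icc 0 1 ⊆ invSet p n := by
    rintro _ ⟨t, ht, rfl⟩; exact h t ht
  have h0mem : (0 : Tuple g n) ∈ (fun t : ℝ => t • X) '' Set.Icc 0 1 :=
    ⟨0, ⟨le_refl 0, zero_le_one⟩, zero_smul ℝ X⟩
  have hXmem : X ∈ (fun t : ℝ => t • X) '' Set.Icc 0 1 :=
    ⟨1, ⟨zero_le_one, le_refl 1⟩, one_smul ℝ X⟩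
  exact (hpre.subset_connectedComponentIn h0mem hsub) hXmem

lemma smul_dsum {n m : ℕ} (t : ℝ) (X : Tuple g n) (Y : Tuple g m) :
    t • dsum X Y = dsum (t • X) (t • Y) := by
  funext j
  ext i i'
  rcases hr : finSumFinEquiv.symm i with r | r <;> rcases hs : finSumFinEquiv.symm i' with s | s <;>
    simp [dsum, Matrix.reindex_apply, Matrix.submatrix_apply, hr, hs, Matrix.smul_apply,
      Pi.smul_apply]

lemma Dset_dsum (p : NCPoly g d δ) (h0 : IsUnit p.constantCoeff)
    {n m : ℕ} (hconvn : Convex ℝ (Dset p n)) (hconvm : Convex ℝ (Dset p m))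
    {X : Tuple g n} {Y : Tuple g m} (hX : X ∈ Dset p n) (hY : Y ∈ Dset p m) :
    dsum X Y ∈ Dset p (n + m) := by
  apply mem_Dset_of_segment
  intro t ht
  rw [smul_dsum]
  exact invSet_dsum p (smul_mem_invSet p h0 hconvn hX ht) (smul_mem_invSet p h0 hconvm hY ht)

lemma Dset_dsum_right (p : NCPoly g d δ) {n m : ℕ}
    (hconv : Convex ℝ (Dset p (n + m))) (h0 : IsUnit p.constantCoeff)
    {X : Tuple g n} {Y : Tuple g m} (h : dsum X Y ∈ Dset p (n + m)) : Y ∈ Dset p m := by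
  apply mem_Dset_of_segment
  intro t ht
  have := smul_mem_invSet p h0 hconv h ht
  rw [smul_dsum] at this
  exact invSet_dsum_right p this

lemma Dset_conj (p : NCPoly g d δ) (h0 : IsUnit p.constantCoeff) {n : ℕ}
    (hconv : Convex ℝ (Dset p n)) (U : Matrix (Fin n) (Fin n) ℝ)
    (h1 : U * Uᵀ = 1) (h2 : Uᵀ * U = 1) {X : Tuple g n} (hX : X ∈ Dset p n) :
    (fun j => Uᵀ * X j * U) ∈ Dset p n := by
  apply mem_Dset_of_segment
  intro t ht
  have hmem := smul_mem_invSet p h0 hconv hX ht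
  have : (fun j => Uᵀ * (t • X) j * U) = t • (fun j => Uᵀ * X j * U) := by
    funext j
    simp [mul_smul_comm, smul_mul_assoc]
  rw [← this]
  exact invSet_conj p U h1 h2 hmem

lemma continuous_wordEval {n : ℕ} : ∀ {k : ℕ} (w : Fin k → Fin g),
    Continuous fun X : Tuple g n => wordEval X w := by
  intro k
  induction k with
  | zero => intro w; simp only [wordEval, List.ofFn_zero, List.prod_nil]; exact continuous_const
  | succ k ih =>
      intro w
      simp only [wordEval_succ]
      exact (continuous_apply (w 0)).matrix_mul (ih (w ∘ Fin.succ))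

lemma continuous_eval (p : NCPoly g d δ) {n : ℕ} :
    Continuous fun X : Tuple g n => p.eval X := by
  unfold NCPoly.eval
  apply continuous_finset_sum
  intro k _
  apply continuous_finset_sum
  intro w _
  apply continuous_matrix
  rintro ⟨a, r⟩ ⟨b, s⟩
  exact continuous_const.mul ((continuous_wordEval w).matrix_elem r s)

end DsetAux

open DsetAux

/-- Under the standing assumptions (`p` symmetric, `p(0)` invertible, `𝒟_p` bounded and each
`𝒟_p(n)` convex), `𝒟_p` is an open matrix convex set: each `𝒟_p(n)` is open (relative to
the symmetric tuples) and contains `0`; `𝒟_p` respects direct sums; `𝒟_p` respects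
simultaneous conjugation by contractions; and each `𝒟_p(n)` is convex and bounded. -/
theorem Dset_is_open_matrix_convex
    {g d δ : ℕ} (p : NCPoly g d δ) (hsym : p.IsSymmPoly)
    (h0 : IsUnit p.constantCoeff)
    (hconv : ∀ n, Convex ℝ (Dset p n))
    (hbdd : ∃ K : ℝ, ∀ n, ∀ X ∈ Dset p n, (∑ j, ‖X j‖) ≤ K) :
    (∀ n, (0 : Tuple g n) ∈ Dset p n ∧
        IsOpen {X : {X : Tuple g n // ∀ j, (X j).IsSymm} | (X : Tuple g n) ∈ Dset p n}) ∧
    (∀ n m, ∀ X ∈ Dset p n, ∀ Y ∈ Dset p m, dsum X Y ∈ Dset p (n + m)) ∧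
    (∀ n k : ℕ, ∀ X ∈ Dset p n, ∀ F : Matrix (Fin n) (Fin k) ℝ,
        (1 - Fᵀ * F).PosSemidef → (fun j => Fᵀ * X j * F) ∈ Dset p k) ∧
    (∀ n, Convex ℝ (Dset p n) ∧ Bornology.IsBounded (Dset p n)) := by
  refine ⟨?_, ?_, ?_, ?_⟩
  · -- (i)
    intro n
    refine ⟨zero_mem_Dset p h0 n, ?_⟩
    rw [isOpen_iff_mem_nhds]
    rintro X (hX : (X : Tuple g n) ∈ Dset p n)
    have hO : IsOpen {M : Tuple g n | IsUnit (p.eval M)} := by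
      have : {M : Tuple g n | IsUnit (p.eval M)}
          = (fun M : Tuple g n => (p.eval M).det) ⁻¹' {(0 : ℝ)}ᶜ := by
        ext M
        simp [Matrix.isUnit_iff_isUnit_det, isUnit_iff_ne_zero]
      rw [this]
      exact (continuous_eval p).matrix_det.isOpen_preimage _ isOpen_compl_singleton
    have hXO : (X : Tuple g n) ∈ {M : Tuple g n | IsUnit (p.eval M)} :=
      (connectedComponentIn_subset _ _ hX).2
    obtain ⟨ε, hε, hball⟩ := Metric.isOpen_iff.1 hO _ hXO
    have hnhds : (Subtype.val ⁻¹' Metric.ball (X : Tuple g n) ε :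
        Set {X : Tuple g n // ∀ j, (X j).IsSymm}) ∈ nhds X :=
      continuous_subtype_val.continuousAt.preimage_mem_nhds (Metric.ball_mem_nhds _ hε)
    refine Filter.mem_of_superset hnhds ?_
    rintro Y (hY : (Y : Tuple g n) ∈ Metric.ball (X : Tuple g n) ε)
    show (Y : Tuple g n) ∈ Dset p n
    set s := segment ℝ (X : Tuple g n) (Y : Tuple g n) with hs
    have hsymmconv : Convex ℝ {M : Tuple g n | ∀ j, (M j).IsSymm} := by
      intro x hx y hy a b _ _ _
      intro j
      have : (a • x + b • y) j = a • x j + b • y j := rfl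
      rw [Set.mem_setOf_eq] at hx hy
      show _ = _
      rw [this, Matrix.transpose_add, Matrix.transpose_smul, Matrix.transpose_smul,
        (hx j).eq, (hy j).eq]
    have hsub : s ⊆ invSet p n := by
      intro Z hZ
      constructor
      · exact hsymmconv.segment_subset (X.2 : ∀ j, ((X : Tuple g n) j).IsSymm) Y.2 hZ
      · exact hball ((convex_ball _ _).segment_subset (Metric.mem_ball_self hε) hY hZ)
    have hpre : IsPreconnected s := (convex_segment _ _).isPreconnected
    have hmem := hpre.subset_connectedComponentIn (left_mem_segment ℝ _ _) hsub
      (right_mem_segment ℝ _ _)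
    have hcomp : connectedComponentIn (invSet p n) (0 : Tuple g n)
        = connectedComponentIn (invSet p n) (X : Tuple g n) :=
      connectedComponentIn_eq hX
    rw [Dset, hcomp]
    exact hmem
  · -- (ii)
    intro n m X hX Y hY
    exact Dset_dsum p h0 (hconv n) (hconv m) hX hY
  · -- (iii)
    intro n k X hX F hF
    set S : Matrix (Fin k) (Fin k) ℝ :=
      (open scoped MatrixOrder in CFC.sqrt (1 - Fᵀ * F)) with hSdef
    have hSsymm : Sᵀ = S := by
      open scoped MatrixOrder in
      have h : S.IsHermitian := (CFC.sqrt_nonneg (1 - Fᵀ * F)).posSemidef.isHermitian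
      simpa [Matrix.IsHermitian, Matrix.conjTranspose_eq_transpose_of_trivial] using h
    have hSS : S * S = 1 - Fᵀ * F := by
      open scoped MatrixOrder in exact CFC.sqrt_mul_sqrt_self _ hF.nonneg
    set N := n + k with hN
    set V : Matrix (Fin N) (Fin k) ℝ := (Matrix.fromRows F S).submatrix ⇑finSumFinEquiv.symm id
      with hVdef
    have hVT : Vᵀ = (Matrix.fromCols Fᵀ Sᵀ).submatrix id ⇑finSumFinEquiv.symm := by
      rw [hVdef, Matrix.transpose_submatrix, Matrix.transpose_fromRows]
    have hV : Vᵀ * V = 1 := by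
      rw [hVT, hVdef, Matrix.submatrix_mul_equiv, Matrix.fromCols_mul_fromRows,
        Matrix.submatrix_id_id, hSsymm, hSS]
      exact add_sub_cancel _ _
    set A : Matrix (Fin N) (Fin N) ℝ := 1 - V * Vᵀ with hAdef
    have hAA : (V * Vᵀ) * (V * Vᵀ) = V * Vᵀ := by
      rw [Matrix.mul_assoc, ← Matrix.mul_assoc Vᵀ V, hV, Matrix.one_mul]
    set Ublk : Matrix ((Fin N) ⊕ (Fin k)) ((Fin N) ⊕ (Fin k)) ℝ :=
      Matrix.fromBlocks A V Vᵀ 0 with hUblkdef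
    have hUblkT : Ublkᵀ = Ublk := by
      simp [hUblkdef, hAdef, Matrix.fromBlocks_transpose, Matrix.transpose_sub,
        Matrix.transpose_mul]
    have hUblk2 : Ublk * Ublk = 1 := by
      rw [hUblkdef, Matrix.fromBlocks_multiply]
      have e1 : A * A + V * Vᵀ = 1 := by
        have : A * A = 1 - V * Vᵀ - V * Vᵀ + (V * Vᵀ) * (V * Vᵀ) := by
          rw [hAdef]; noncomm_ring
        rw [this, hAA]; abel
      have e2 : A * V + V * (0 : Matrix (Fin k) (Fin k) ℝ) = 0 := by
        rw [hAdef, Matrix.mul_zero, add_zero, Matrix.sub_mul, Matrix.one_mul,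
          Matrix.mul_assoc, hV, Matrix.mul_one, sub_self]
      have e3 : Vᵀ * A + (0 : Matrix (Fin k) (Fin k) ℝ) * Vᵀ = 0 := by
        rw [hAdef, Matrix.zero_mul, add_zero, Matrix.mul_sub, Matrix.mul_one,
          ← Matrix.mul_assoc, hV, Matrix.one_mul, sub_self]
      have e4 : Vᵀ * V + (0 : Matrix (Fin k) (Fin k) ℝ) * (0 : Matrix (Fin k) (Fin k) ℝ)
          = 1 := by rw [hV, Matrix.zero_mul, add_zero]
      rw [e1, e2, e3, e4, Matrix.fromBlocks_one]
    set U : Matrix (Fin (N + k)) (Fin (N + k)) ℝ :=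
      Ublk.submatrix ⇑finSumFinEquiv.symm ⇑finSumFinEquiv.symm with hUdef
    have hUT : Uᵀ = U := by rw [hUdef, Matrix.transpose_submatrix, hUblkT]
    have hU2 : U * U = 1 := by
      rw [hUdef, Matrix.submatrix_mul_equiv, hUblk2, Matrix.submatrix_one_equiv]
    have hUa : U * Uᵀ = 1 := by rw [hUT, hU2]
    have hUb : Uᵀ * U = 1 := by rw [hUT, hU2]
    -- X-hat
    set Xt : Tuple g N := dsum X (0 : Tuple g k) with hXt
    have hXtmem : Xt ∈ Dset p N := Dset_dsum p h0 (hconv n) (hconv k) hX (zero_mem_Dset p h0 k)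
    set Xh : Tuple g (N + k) := dsum Xt (0 : Tuple g k) with hXh
    have hXhmem : Xh ∈ Dset p (N + k) :=
      Dset_dsum p h0 (hconv N) (hconv k) hXtmem (zero_mem_Dset p h0 k)
    set Y : Tuple g (N + k) := fun j => Uᵀ * Xh j * U with hY
    have hYmem : Y ∈ Dset p (N + k) := Dset_conj p h0 (hconv (N + k)) U hUa hUb hXhmem
    set Dblk : Matrix ((Fin N) ⊕ (Fin k)) ((Fin N) ⊕ (Fin k)) ℝ :=
      Matrix.fromBlocks 1 0 0 (-1) with hDblkdef
    set Dmat : Matrix (Fin (N + k)) (Fin (N + k)) ℝ :=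
      Dblk.submatrix ⇑finSumFinEquiv.symm ⇑finSumFinEquiv.symm with hDdef
    have hDblkT : Dblkᵀ = Dblk := by
      rw [hDblkdef, Matrix.fromBlocks_transpose]
      simp
    have hDT : Dmatᵀ = Dmat := by rw [hDdef, Matrix.transpose_submatrix, hDblkT]
    have hDblk2 : Dblk * Dblk = 1 := by
      rw [hDblkdef, Matrix.fromBlocks_multiply]
      simp [Matrix.neg_mul, Matrix.mul_neg]
    have hD2 : Dmat * Dmat = 1 := by
      rw [hDdef, Matrix.submatrix_mul_equiv, hDblk2, Matrix.submatrix_one_equiv]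
    have hDa : Dmat * Dmatᵀ = 1 := by rw [hDT, hD2]
    have hDb : Dmatᵀ * Dmat = 1 := by rw [hDT, hD2]
    set Z : Tuple g (N + k) := fun j => Dmatᵀ * Y j * Dmat with hZ
    have hZmem : Z ∈ Dset p (N + k) := Dset_conj p h0 (hconv (N + k)) Dmat hDa hDb hYmem
    have hWmem : (1 / 2 : ℝ) • Y + (1 / 2 : ℝ) • Z ∈ Dset p (N + k) :=
      hconv (N + k) hYmem hZmem (by norm_num) (by norm_num) (by norm_num)
    -- identify the average as a direct sum
    set P : Tuple g N := fun j => A * Xt j * A with hP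
    set Q : Tuple g k := fun j => Vᵀ * Xt j * V with hQ
    have hXhj : ∀ j, Xh j = (Matrix.fromBlocks (Xt j) 0 0 0).submatrix
        ⇑finSumFinEquiv.symm ⇑finSumFinEquiv.symm := by
      intro j
      rw [hXh, dsum, Matrix.reindex_apply]
      rfl
    have hinner : ∀ j, Ublk * Matrix.fromBlocks (Xt j) 0 0 0 * Ublk
        = Matrix.fromBlocks (A * Xt j * A) (A * Xt j * V) (Vᵀ * Xt j * A) (Vᵀ * Xt j * V) := by
      intro j
      rw [hUblkdef, Matrix.fromBlocks_multiply, Matrix.fromBlocks_multiply]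
      congr 1 <;> simp [Matrix.mul_assoc]
    have hYj : ∀ j, Y j = (Matrix.fromBlocks (A * Xt j * A) (A * Xt j * V)
        (Vᵀ * Xt j * A) (Vᵀ * Xt j * V)).submatrix ⇑finSumFinEquiv.symm ⇑finSumFinEquiv.symm := by
      intro j
      rw [hY]
      show Uᵀ * Xh j * U = _
      rw [hUT, hXhj j, hUdef, Matrix.submatrix_mul_equiv, Matrix.submatrix_mul_equiv, hinner j]
    have hZj : ∀ j, Z j = (Matrix.fromBlocks (A * Xt j * A) (-(A * Xt j * V))
        (-(Vᵀ * Xt j * A)) (Vᵀ * Xt j * V)).submatrix ⇑finSumFinEquiv.symm ⇑finSumFinEquiv.symm := by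
      intro j
      rw [hZ]
      show Dmatᵀ * Y j * Dmat = _
      rw [hDT, hYj j, hDdef, Matrix.submatrix_mul_equiv, Matrix.submatrix_mul_equiv,
        hDblkdef, Matrix.fromBlocks_multiply, Matrix.fromBlocks_multiply]
      congr 2 <;> simp
    have hWeq : (1 / 2 : ℝ) • Y + (1 / 2 : ℝ) • Z = dsum P Q := by
      funext j
      have : ((1 / 2 : ℝ) • Y + (1 / 2 : ℝ) • Z) j = (1 / 2 : ℝ) • Y j + (1 / 2 : ℝ) • Z j := rfl
      rw [this, hYj j, hZj j, dsum, Matrix.reindex_apply]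
      ext i i'
      rcases hr : finSumFinEquiv.symm i with r | r <;>
        rcases hs : finSumFinEquiv.symm i' with s | s <;>
        · simp only [Matrix.add_apply, Matrix.smul_apply, Matrix.submatrix_apply, hr, hs,
            Matrix.fromBlocks_apply₁₁, Matrix.fromBlocks_apply₁₂, Matrix.fromBlocks_apply₂₁,
            Matrix.fromBlocks_apply₂₂, Matrix.neg_apply, Matrix.zero_apply, hP, hQ,
            smul_eq_mul]
          ring
    rw [hWeq] at hWmem
    have hQmem : Q ∈ Dset p k := Dset_dsum_right p (hconv (N + k)) h0 hWmem
    have hQeq : Q = fun j => Fᵀ * X j * F := by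
      funext j
      rw [hQ]
      show Vᵀ * Xt j * V = _
      have hXtj : Xt j = (Matrix.fromBlocks (X j) 0 0 0).submatrix
          ⇑finSumFinEquiv.symm ⇑finSumFinEquiv.symm := by
        rw [hXt, dsum, Matrix.reindex_apply]
        rfl
      rw [hXtj, hVT, hVdef, Matrix.submatrix_mul_equiv, Matrix.submatrix_mul_equiv,
        Matrix.submatrix_id_id, Matrix.fromCols_mul_fromBlocks,
        Matrix.fromCols_mul_fromRows]
      simp
    rw [← hQeq]
    exact hQmem
  · -- (iv)
    intro n
    refine ⟨hconv n, ?_⟩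
    obtain ⟨K, hK⟩ := hbdd
    have h0K : (0 : ℝ) ≤ K := by
      have := hK n 0 (zero_mem_Dset p h0 n)
      simpa using this
    refine isBounded_iff_forall_norm_le.2 ⟨K, fun X hX => ?_⟩
    rw [pi_norm_le_iff_of_nonneg h0K]
    intro j
    calc ‖X j‖ ≤ ∑ i, ‖X i‖ :=
          Finset.single_le_sum (fun i _ => norm_nonneg (X i)) (Finset.mem_univ j)
      _ ≤ K := hK n X hX
end
end

section
/- Let p be a symmetric δ×δ nc polynomial of degree d with p(0) invertible and each 𝒟_p(n) convex and bounded. Let (X, v) ∈ ∂̂𝒟_p (X ∈ ∂𝒟_p(n), p(X)v = 0, v ≠ 0) and let ℳ = {q(X)v : q ∈ 𝒫_d^δ} ⊆ ℝⁿ, where 𝒫_d^δ is the space of 1×δ rows of nc polynomials of degree at most d. Then (P_ℳ X|_ℳ, v) ∈ ∂̂𝒟_p: in particular t·P_ℳ X|_ℳ ∈ 𝒟_p for 0 ≤ t < 1 and p(P_ℳ X|_ℳ) v = 0. Moreover dim ℳ ≤ δ·Σ_{j=0}^d g^j. -/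
open Matrix
open scoped Matrix.Norms.L2Operator

noncomputable section

/-- Evaluation of a row `q ∈ 𝒫_e^δ` (a `1 × δ` row of scalar nc polynomials of degree at most
`e`, given by coefficient row-vectors) at `X`, applied to `v = Σ e_α ⊗ v_α ∈ ℝ^δ ⊗ ℝⁿ`:
`q(X)v = Σ_α q_α(X) v_α`. -/
def rowEval {g δ : ℕ} (e : ℕ) (q : ∀ k : ℕ, (Fin k → Fin g) → (Fin δ → ℝ))
    {n : ℕ} (X : Tuple g n) (v : Fin δ × Fin n → ℝ) : Fin n → ℝ :=
  ∑ k ∈ Finset.range (e + 1), ∑ w : Fin k → Fin g, ∑ α : Fin δ,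
    q k w α • (wordEval X w).mulVec fun i => v (α, i)

/-- The subspace `ℳ = {q(X)v : q ∈ 𝒫_e^δ} ⊆ ℝⁿ`. -/
def rowSpace {g δ : ℕ} (e : ℕ) {n : ℕ} (X : Tuple g n) (v : Fin δ × Fin n → ℝ) :
    Set (Fin n → ℝ) :=
  {u | ∃ q : ∀ k : ℕ, (Fin k → Fin g) → (Fin δ → ℝ), u = rowEval e q X v}


open scoped Kronecker

section A
variable {g d δ n : ℕ} (p : NCPoly g d δ)

lemma wordEval_nil (X : Tuple g n) (w : Fin 0 → Fin g) : wordEval X w = 1 := by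
  simp [wordEval]

lemma wordEval_succ {k : ℕ} (X : Tuple g n) (w : Fin (k+1) → Fin g) :
    wordEval X w = X (w 0) * wordEval X (fun i => w i.succ) := by
  simp [wordEval, List.ofFn_succ]

lemma continuous_wordEval {k : ℕ} (w : Fin k → Fin g) :
    Continuous fun X : Tuple g n => wordEval X w := by
  induction k with
  | zero => simpa [wordEval_nil] using continuous_const
  | succ k ih =>
      simp only [wordEval_succ]
      exact Continuous.matrix_mul (continuous_apply (w 0)) (ih _)

lemma continuous_eval : Continuous fun X : Tuple g n => p.eval X := by
  unfold NCPoly.eval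
  refine continuous_finset_sum _ fun k _ => continuous_finset_sum _ fun w _ => ?_
  apply continuous_matrix
  intro i j
  exact continuous_const.mul
    (((continuous_apply j.2).comp (continuous_apply i.2)).comp (continuous_wordEval w))

lemma eval_zero : p.eval (0 : Tuple g n) =
    Matrix.kroneckerMap (· * ·) p.constantCoeff (1 : Matrix (Fin n) (Fin n) ℝ) := by
  unfold NCPoly.eval
  rw [Finset.sum_eq_single_of_mem 0 (Finset.mem_range.2 (Nat.succ_pos d))]
  · rw [Fintype.sum_subsingleton _ finZeroElim]
    rw [wordEval_nil]
    rfl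
  · intro k _ hk
    obtain ⟨k', rfl⟩ := Nat.exists_eq_succ_of_ne_zero hk
    apply Finset.sum_eq_zero
    intro w _
    have : wordEval (0 : Tuple g n) w = 0 := by rw [wordEval_succ]; simp
    rw [this]
    ext ⟨a,b⟩ ⟨c,e⟩
    simp [Matrix.kroneckerMap]

lemma isUnit_kron_units {a b : ℕ} {A : Matrix (Fin a) (Fin a) ℝ} {B : Matrix (Fin b) (Fin b) ℝ}
    (hA : IsUnit A) (hB : IsUnit B) :
    IsUnit (Matrix.kroneckerMap (· * ·) A B) := by
  rw [isUnit_iff_exists] at hA hB ⊢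
  obtain ⟨A', hA1, hA2⟩ := hA
  obtain ⟨B', hB1, hB2⟩ := hB
  refine ⟨Matrix.kroneckerMap (· * ·) A' B', ?_, ?_⟩
  · show A ⊗ₖ B * A' ⊗ₖ B' = 1
    rw [← Matrix.mul_kronecker_mul, hA1, hB1, Matrix.one_kronecker_one]
  · show A' ⊗ₖ B' * A ⊗ₖ B = 1
    rw [← Matrix.mul_kronecker_mul, hA2, hB2, Matrix.one_kronecker_one]

lemma zero_mem_invSet (h0 : IsUnit p.constantCoeff) : (0 : Tuple g n) ∈ invSet p n := by
  constructor
  · intro j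
    simp [Matrix.IsSymm]
  · rw [eval_zero]
    exact isUnit_kron_units h0 isUnit_one

lemma zero_mem_Dset (h0 : IsUnit p.constantCoeff) : (0 : Tuple g n) ∈ Dset p n :=
  mem_connectedComponentIn (zero_mem_invSet p h0)

lemma Dset_subset_invSet : Dset p n ⊆ invSet p n := connectedComponentIn_subset _ _

lemma isOpen_unitSet : IsOpen {X : Tuple g n | IsUnit (p.eval X)} := by
  have h1 : {M : Matrix (Fin δ × Fin n) (Fin δ × Fin n) ℝ | IsUnit M} =
      (fun M : Matrix (Fin δ × Fin n) (Fin δ × Fin n) ℝ => M.det) ⁻¹' {x | x ≠ 0} := by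
    ext M; simp [Matrix.isUnit_iff_isUnit_det, isUnit_iff_ne_zero]
  have h2 : IsOpen {M : Matrix (Fin δ × Fin n) (Fin δ × Fin n) ℝ | IsUnit M} := by
    rw [h1]; exact isOpen_ne.preimage (continuous_id.matrix_det)
  exact h2.preimage (continuous_eval p)

lemma convex_symmSet : Convex ℝ {X : Tuple g n | ∀ j, (X j).IsSymm} := by
  intro x hx y hy a b _ _ _
  intro j
  have h : (a • x + b • y) j = a • x j + b • y j := rfl
  rw [Matrix.IsSymm, h, Matrix.transpose_add, Matrix.transpose_smul, Matrix.transpose_smul,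
    hx j, hy j]

lemma isClosed_symmSet : IsClosed {X : Tuple g n | ∀ j, (X j).IsSymm} := by
  have h : {X : Tuple g n | ∀ j, (X j).IsSymm} = ⋂ j, {X : Tuple g n | (X j)ᵀ = X j} := by
    ext X; simp only [Set.mem_setOf_eq, Set.mem_iInter]; rfl
  rw [h]
  exact isClosed_iInter fun j =>
    isClosed_eq ((continuous_apply j).matrix_transpose) (continuous_apply j)

end A

section B
variable {g d δ n : ℕ} (p : NCPoly g d δ)

lemma smul_mem_Dset (hconv : Convex ℝ (Dset p n)) (h0 : IsUnit p.constantCoeff)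
    {Z : Tuple g n} (hZ : Z ∈ Dset p n) {s : ℝ} (hs0 : 0 ≤ s) (hs1 : s ≤ 1) :
    s • Z ∈ Dset p n := by
  have := hconv hZ (zero_mem_Dset p h0) hs0 (sub_nonneg.2 hs1) (show s + (1-s) = 1 by ring)
  simpa using this

lemma ball_mem_Dset {Z : Tuple g n} (hZ : Z ∈ Dset p n) :
    ∃ ε > 0, ∀ Z' : Tuple g n, (∀ j, (Z' j).IsSymm) → dist Z' Z < ε → Z' ∈ Dset p n := by
  have hZi : Z ∈ invSet p n := Dset_subset_invSet p hZ
  obtain ⟨ε, hε, hball⟩ := Metric.isOpen_iff.1 (isOpen_unitSet p) Z hZi.2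
  refine ⟨ε, hε, fun Z' hsymm hdist => ?_⟩
  have hB : Convex ℝ (Metric.ball Z ε ∩ {X : Tuple g n | ∀ j, (X j).IsSymm}) :=
    (convex_ball Z ε).inter convex_symmSet
  have hsub : (Metric.ball Z ε ∩ {X : Tuple g n | ∀ j, (X j).IsSymm}) ⊆ invSet p n := by
    rintro W ⟨hW1, hW2⟩
    exact ⟨hW2, hball hW1⟩
  have hZmem : Z ∈ Metric.ball Z ε ∩ {X : Tuple g n | ∀ j, (X j).IsSymm} :=
    ⟨Metric.mem_ball_self hε, hZi.1⟩
  have := hB.isPreconnected.subset_connectedComponentIn hZmem hsub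
  have hZ'mem : Z' ∈ connectedComponentIn (invSet p n) Z :=
    this ⟨Metric.mem_ball.2 hdist, hsymm⟩
  have heq : connectedComponentIn (invSet p n) 0 = connectedComponentIn (invSet p n) Z :=
    connectedComponentIn_eq hZ
  rw [Dset, heq]
  exact hZ'mem

lemma symm_of_closure {X : Tuple g n} (hX : X ∈ closure (Dset p n)) :
    ∀ j, (X j).IsSymm := by
  have h1 : closure (Dset p n) ⊆ {X : Tuple g n | ∀ j, (X j).IsSymm} := by
    apply closure_minimal _ isClosed_symmSet
    exact fun W hW => (Dset_subset_invSet p hW).1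
  exact h1 hX

lemma scale_closure_mem (hconv : Convex ℝ (Dset p n)) (h0 : IsUnit p.constantCoeff)
    {X : Tuple g n} (hX : X ∈ closure (Dset p n)) {t : ℝ} (ht0 : 0 ≤ t) (ht1 : t < 1) :
    t • X ∈ Dset p n := by
  rcases eq_or_lt_of_le ht0 with h | htpos
  · rw [← h, zero_smul]
    exact zero_mem_Dset p h0
  obtain ⟨ρ, hρ, hball⟩ := ball_mem_Dset p (zero_mem_Dset p h0)
  have h1t : (0:ℝ) < 1 - t := by linarith
  obtain ⟨Y, hY, hdY⟩ : ∃ Y ∈ Dset p n, dist X Y < ρ * (1 - t) / t := by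
    have := Metric.mem_closure_iff.1 hX (ρ * (1 - t) / t)
      (by positivity)
    obtain ⟨Y, hY, hd⟩ := this
    exact ⟨Y, hY, hd⟩
  set W : Tuple g n := (t / (1 - t)) • (X - Y) with hW
  have hWsymm : ∀ j, (W j).IsSymm := by
    intro j
    have hXs := symm_of_closure p hX j
    have hYs := (Dset_subset_invSet p hY).1 j
    have : W j = (t / (1 - t)) • (X j - Y j) := rfl
    rw [Matrix.IsSymm, this, Matrix.transpose_smul, Matrix.transpose_sub, hXs, hYs]
  have hWnorm : dist W 0 < ρ := by
    rw [dist_zero_right, hW, norm_smul]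
    have h2 : ‖X - Y‖ = dist X Y := (dist_eq_norm X Y).symm
    rw [h2]
    have habs : ‖t / (1-t)‖ = t / (1-t) := by
      rw [Real.norm_eq_abs, abs_of_nonneg (by positivity)]
    rw [habs]
    calc t / (1-t) * dist X Y < t / (1-t) * (ρ * (1 - t) / t) := by
          apply mul_lt_mul_of_pos_left hdY (by positivity)
      _ = ρ := by field_simp
  have hWmem : W ∈ Dset p n := hball W hWsymm hWnorm
  have hcomb := hconv hY hWmem ht0 (le_of_lt h1t) (by ring)
  have : t • Y + (1 - t) • W = t • X := by
    rw [hW, smul_smul]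
    rw [mul_div_assoc']
    rw [mul_comm (1-t) t, mul_div_assoc, div_self (ne_of_gt h1t), mul_one]
    rw [smul_sub]
    abel
  rwa [this] at hcomb

end B

section C
variable {g d δ n k : ℕ} (p : NCPoly g d δ)

lemma wordEval_conj {m : ℕ} (U : Matrix (Fin n) (Fin n) ℝ) (hU : U * Uᵀ = 1)
    (hU2 : Uᵀ * U = 1) (X : Tuple g n) (w : Fin m → Fin g) :
    wordEval (fun j => Uᵀ * X j * U) w = Uᵀ * wordEval X w * U := by
  induction m with
  | zero => rw [wordEval_nil, wordEval_nil, Matrix.mul_one, hU2]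
  | succ m ih =>
      rw [wordEval_succ, wordEval_succ, ih]
      simp only [Matrix.mul_assoc]
      rw [← Matrix.mul_assoc U Uᵀ, hU, Matrix.one_mul]

lemma eval_conj (U : Matrix (Fin n) (Fin n) ℝ) (hU : U * Uᵀ = 1)
    (hU2 : Uᵀ * U = 1) (X : Tuple g n) :
    p.eval (fun j => Uᵀ * X j * U) =
      (Matrix.kroneckerMap (· * ·) (1 : Matrix (Fin δ) (Fin δ) ℝ) Uᵀ) * p.eval X *
      (Matrix.kroneckerMap (· * ·) (1 : Matrix (Fin δ) (Fin δ) ℝ) U) := by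
  unfold NCPoly.eval
  simp only [Finset.mul_sum, Finset.sum_mul]
  apply Finset.sum_congr rfl
  intro m _
  apply Finset.sum_congr rfl
  intro w _
  rw [wordEval_conj U hU hU2]
  show (p.coeff m w) ⊗ₖ (Uᵀ * wordEval X w * U) = ((1 : Matrix (Fin δ) (Fin δ) ℝ) ⊗ₖ Uᵀ) *
      ((p.coeff m w) ⊗ₖ (wordEval X w)) * ((1 : Matrix (Fin δ) (Fin δ) ℝ) ⊗ₖ U)
  rw [← Matrix.mul_kronecker_mul, ← Matrix.mul_kronecker_mul, Matrix.one_mul, Matrix.mul_one]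

lemma conj_mem_invSet (U : Matrix (Fin n) (Fin n) ℝ) (hU : U * Uᵀ = 1)
    (hU2 : Uᵀ * U = 1) {X : Tuple g n} (hX : X ∈ invSet p n) :
    (fun j => Uᵀ * X j * U) ∈ invSet p n := by
  have hUu : IsUnit U := ⟨⟨U, Uᵀ, hU, mul_eq_one_comm.mp hU⟩, rfl⟩
  have hUuT : IsUnit Uᵀ := ⟨⟨Uᵀ, U, hU2, hU⟩, rfl⟩
  constructor
  · intro j
    show (Uᵀ * X j * U)ᵀ = Uᵀ * X j * U
    rw [Matrix.transpose_mul, Matrix.transpose_mul, Matrix.transpose_transpose, hX.1 j,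
      Matrix.mul_assoc]
  · rw [eval_conj p U hU hU2]
    exact ((isUnit_kron_units isUnit_one hUuT).mul hX.2).mul (isUnit_kron_units isUnit_one hUu)

lemma conj_mem_Dset (h0 : IsUnit p.constantCoeff) (U : Matrix (Fin n) (Fin n) ℝ)
    (hU : U * Uᵀ = 1) (hU2 : Uᵀ * U = 1) {X : Tuple g n} (hX : X ∈ Dset p n) :
    (fun j => Uᵀ * X j * U) ∈ Dset p n := by
  set f : Tuple g n → Tuple g n := fun Y => (fun j => Uᵀ * Y j * U) with hf
  have hcont : Continuous f := by
    apply continuous_pi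
    intro j
    exact Continuous.matrix_mul (Continuous.matrix_mul continuous_const (continuous_apply j))
      continuous_const
  have himg : IsPreconnected (f '' Dset p n) :=
    (isPreconnected_connectedComponentIn).image f hcont.continuousOn
  have hsub : f '' Dset p n ⊆ invSet p n := by
    rintro _ ⟨Y, hY, rfl⟩
    exact conj_mem_invSet p U hU hU2 (Dset_subset_invSet p hY)
  have h0mem : (0 : Tuple g n) ∈ f '' Dset p n := by
    refine ⟨0, zero_mem_Dset p h0, ?_⟩
    funext j
    show Uᵀ * (0 : Matrix (Fin n) (Fin n) ℝ) * U = (0 : Tuple g n) j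
    rw [Matrix.mul_zero, Matrix.zero_mul]
    rfl
  have := himg.subset_connectedComponentIn h0mem hsub
  exact this ⟨X, hX, rfl⟩

-- compression invertibility
lemma kron_one_mul_kron_one {a b c : ℕ} (A : Matrix (Fin a) (Fin b) ℝ)
    (B : Matrix (Fin b) (Fin c) ℝ) :
    (Matrix.kroneckerMap (· * ·) (1 : Matrix (Fin δ) (Fin δ) ℝ) A) *
    (Matrix.kroneckerMap (· * ·) (1 : Matrix (Fin δ) (Fin δ) ℝ) B) =
    Matrix.kroneckerMap (· * ·) (1 : Matrix (Fin δ) (Fin δ) ℝ) (A * B) := by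
  show ((1 : Matrix (Fin δ) (Fin δ) ℝ) ⊗ₖ A) * ((1 : Matrix (Fin δ) (Fin δ) ℝ) ⊗ₖ B) = _
  rw [← Matrix.mul_kronecker_mul, Matrix.one_mul]

lemma wordEval_intertwine {m : ℕ} (V : Matrix (Fin n) (Fin k) ℝ) (Z : Tuple g n)
    (A : Tuple g k) (hZV : ∀ j, Z j * V = V * A j) (w : Fin m → Fin g) :
    wordEval Z w * V = V * wordEval A w := by
  induction m with
  | zero => rw [wordEval_nil, wordEval_nil, Matrix.one_mul, Matrix.mul_one]
  | succ m ih =>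
      rw [wordEval_succ, wordEval_succ, Matrix.mul_assoc, ih, ← Matrix.mul_assoc, hZV,
        Matrix.mul_assoc]

lemma eval_intertwine (V : Matrix (Fin n) (Fin k) ℝ) (Z : Tuple g n)
    (A : Tuple g k) (hZV : ∀ j, Z j * V = V * A j) :
    p.eval Z * (Matrix.kroneckerMap (· * ·) (1 : Matrix (Fin δ) (Fin δ) ℝ) V) =
      (Matrix.kroneckerMap (· * ·) (1 : Matrix (Fin δ) (Fin δ) ℝ) V) * p.eval A := by
  unfold NCPoly.eval
  simp only [Matrix.mul_sum, Matrix.sum_mul]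
  apply Finset.sum_congr rfl
  intro m _
  apply Finset.sum_congr rfl
  intro w _
  show ((p.coeff m w) ⊗ₖ (wordEval Z w)) * ((1 : Matrix (Fin δ) (Fin δ) ℝ) ⊗ₖ V) =
    ((1 : Matrix (Fin δ) (Fin δ) ℝ) ⊗ₖ V) * ((p.coeff m w) ⊗ₖ (wordEval A w))
  rw [← Matrix.mul_kronecker_mul, ← Matrix.mul_kronecker_mul, Matrix.one_mul, Matrix.mul_one,
    wordEval_intertwine V Z A hZV w]

lemma isUnit_compressed (V : Matrix (Fin n) (Fin k) ℝ) (hV : Vᵀ * V = 1)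
    (Z : Tuple g n) (A : Tuple g k) (hZV : ∀ j, Z j * V = V * A j)
    (hZ : IsUnit (p.eval Z)) : IsUnit (p.eval A) := by
  rw [← Matrix.mulVec_injective_iff_isUnit] at hZ ⊢
  set E := Matrix.kroneckerMap (· * ·) (1 : Matrix (Fin δ) (Fin δ) ℝ) V with hE
  have hEt : Matrix.kroneckerMap (· * ·) (1 : Matrix (Fin δ) (Fin δ) ℝ) Vᵀ * E = 1 := by
    rw [hE, kron_one_mul_kron_one, hV]
    show (1 : Matrix (Fin δ) (Fin δ) ℝ) ⊗ₖ (1 : Matrix (Fin k) (Fin k) ℝ) = 1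
    exact Matrix.one_kronecker_one
  intro x y hxy
  have h1 : E.mulVec ((p.eval A).mulVec x) = E.mulVec ((p.eval A).mulVec y) := by
    rw [hxy]
  have h2 : ∀ u, E.mulVec ((p.eval A).mulVec u) = (p.eval Z).mulVec (E.mulVec u) := by
    intro u
    rw [Matrix.mulVec_mulVec, Matrix.mulVec_mulVec, eval_intertwine p V Z A hZV]
  rw [h2, h2] at h1
  have h3 : E.mulVec x = E.mulVec y := hZ h1
  have h4 : ∀ u : Fin δ × Fin k → ℝ,
      (Matrix.kroneckerMap (· * ·) (1 : Matrix (Fin δ) (Fin δ) ℝ) Vᵀ).mulVec (E.mulVec u) = u := by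
    intro u
    rw [Matrix.mulVec_mulVec, hEt, Matrix.one_mulVec]
  rw [← h4 x, ← h4 y, h3]

end C

section D
variable {g d δ n k : ℕ} (p : NCPoly g d δ)

lemma compress_mem_Dset (h0 : IsUnit p.constantCoeff) (hconv : Convex ℝ (Dset p n))
    (V : Matrix (Fin n) (Fin k) ℝ) (hV : Vᵀ * V = 1)
    {Y : Tuple g n} (hY : Y ∈ Dset p n) :
    (fun j => Vᵀ * Y j * V) ∈ Dset p k := by
  set P : Matrix (Fin n) (Fin n) ℝ := V * Vᵀ with hP
  have hPP : P * P = P := by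
    rw [hP, Matrix.mul_assoc, ← Matrix.mul_assoc Vᵀ V Vᵀ, hV, Matrix.one_mul]
  have hPT : Pᵀ = P := by rw [hP, Matrix.transpose_mul, Matrix.transpose_transpose]
  set R : Matrix (Fin n) (Fin n) ℝ := (2:ℝ) • P - 1 with hR
  have hRT : Rᵀ = R := by
    rw [hR, Matrix.transpose_sub, Matrix.transpose_smul, hPT, Matrix.transpose_one]
  have hRV : R * V = V := by
    rw [hR, Matrix.sub_mul, Matrix.smul_mul, hP, Matrix.mul_assoc, hV, Matrix.mul_one,
      Matrix.one_mul, two_smul]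
    abel
  have hRR : R * R = 1 := by
    rw [hR, Matrix.sub_mul, Matrix.mul_sub, Matrix.mul_sub, Matrix.smul_mul, Matrix.mul_smul,
      hPP, smul_smul]
    simp only [Matrix.one_mul, Matrix.mul_one]
    module
  have hRR' : R * Rᵀ = 1 := by rw [hRT, hRR]
  have hRR'' : Rᵀ * R = 1 := by rw [hRT, hRR]
  have hY' : (fun j => Rᵀ * Y j * R) ∈ Dset p n := conj_mem_Dset p h0 R hRR' hRR'' hY
  have hZ : ((1/2 : ℝ)) • Y + ((1/2 : ℝ)) • (fun j => Rᵀ * Y j * R) ∈ Dset p n :=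
    hconv hY hY' (by norm_num) (by norm_num) (by norm_num)
  set Z : Tuple g n := ((1/2 : ℝ)) • Y + ((1/2 : ℝ)) • (fun j => Rᵀ * Y j * R) with hZdef
  set A : Tuple g k := fun j => Vᵀ * Y j * V with hA
  have hZV : ∀ j, Z j * V = V * A j := by
    intro j
    have h1 : Z j * V = (1/2 : ℝ) • (Y j * V) + (1/2 : ℝ) • (Rᵀ * Y j * R * V) := by
      show ((1/2 : ℝ) • Y j + (1/2 : ℝ) • (Rᵀ * Y j * R)) * V = _
      rw [Matrix.add_mul, Matrix.smul_mul, Matrix.smul_mul]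
    have h2 : Rᵀ * Y j * R * V = (2:ℝ) • (V * A j) - Y j * V := by
      rw [hRT, Matrix.mul_assoc (R * Y j) R V, hRV, Matrix.mul_assoc R (Y j) V, hR,
        Matrix.sub_mul, Matrix.one_mul, Matrix.smul_mul]
      congr 2
      show P * (Y j * V) = V * (Vᵀ * Y j * V)
      rw [hP, Matrix.mul_assoc, Matrix.mul_assoc]
    rw [h1, h2]
    module
  have hsA : ∀ s : ℝ, s ∈ Set.Icc (0:ℝ) 1 → s • A ∈ invSet p k := by
    intro s hs
    have hsZ : s • Z ∈ Dset p n := smul_mem_Dset p hconv h0 hZ hs.1 hs.2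
    have hsZi := Dset_subset_invSet p hsZ
    constructor
    · intro j
      have hYsymm := (Dset_subset_invSet p hY).1 j
      show ((s • A) j)ᵀ = (s • A) j
      have : (s • A) j = s • (Vᵀ * Y j * V) := rfl
      rw [this, Matrix.transpose_smul, Matrix.transpose_mul, Matrix.transpose_mul,
        Matrix.transpose_transpose, hYsymm, Matrix.mul_assoc]
    · apply isUnit_compressed p V hV (s • Z) (s • A) _ hsZi.2
      intro j
      have e1 : (s • Z) j = s • Z j := rfl
      have e2 : (s • A) j = s • A j := rfl
      rw [e1, e2, Matrix.smul_mul, hZV j, Matrix.mul_smul]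
  have hpath : IsPreconnected ((fun s : ℝ => s • A) '' Set.Icc (0:ℝ) 1) :=
    isPreconnected_Icc.image _ (continuous_id.smul continuous_const).continuousOn
  have hsub : (fun s : ℝ => s • A) '' Set.Icc (0:ℝ) 1 ⊆ invSet p k := by
    rintro _ ⟨s, hs, rfl⟩
    exact hsA s hs
  have h0T : (0 : Tuple g k) ∈ (fun s : ℝ => s • A) '' Set.Icc (0:ℝ) 1 :=
    ⟨0, ⟨le_refl 0, zero_le_one⟩, zero_smul ℝ A⟩
  have := hpath.subset_connectedComponentIn h0T hsub
  have hAmem : A ∈ (fun s : ℝ => s • A) '' Set.Icc (0:ℝ) 1 :=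
    ⟨1, ⟨zero_le_one, le_refl 1⟩, one_smul ℝ A⟩
  exact this hAmem

lemma compress_scale_mem_Dset (h0 : IsUnit p.constantCoeff)
    (hconv : Convex ℝ (Dset p n))
    (V : Matrix (Fin n) (Fin k) ℝ) (hV : Vᵀ * V = 1)
    {X : Tuple g n} (hX : X ∈ closure (Dset p n)) {t : ℝ} (ht0 : 0 ≤ t) (ht1 : t < 1) :
    t • (fun j => Vᵀ * X j * V : Tuple g k) ∈ Dset p k := by
  have hY : t • X ∈ Dset p n := scale_closure_mem p hconv h0 hX ht0 ht1
  have := compress_mem_Dset p h0 hconv V hV hY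
  have heq : (fun j => Vᵀ * (t • X) j * V : Tuple g k) =
      t • (fun j => Vᵀ * X j * V : Tuple g k) := by
    funext j
    show Vᵀ * (t • X j) * V = t • (Vᵀ * X j * V)
    rw [Matrix.mul_smul, Matrix.smul_mul]
  rwa [heq] at this

end D

section E
variable {g d δ n : ℕ}

/-- Truncation of a `Fin (d+1)`-indexed coefficient family to an `ℕ`-indexed one. -/
def truncQ {g d δ : ℕ} (q : (k : Fin (d+1)) → (Fin (k : ℕ) → Fin g) → Fin δ → ℝ) :
    ∀ k : ℕ, (Fin k → Fin g) → Fin δ → ℝ :=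
  fun k => if h : k < d + 1 then q ⟨k, h⟩ else fun _ _ => 0

lemma rowEval_apply (e : ℕ) (q : ∀ k : ℕ, (Fin k → Fin g) → Fin δ → ℝ)
    (X : Tuple g n) (v : Fin δ × Fin n → ℝ) (i : Fin n) :
    rowEval e q X v i = ∑ k ∈ Finset.range (e + 1), ∑ w : Fin k → Fin g, ∑ α : Fin δ,
      q k w α * ((wordEval X w).mulVec fun r => v (α, r)) i := by
  unfold rowEval
  rw [Finset.sum_apply]
  refine Finset.sum_congr rfl fun k _ => ?_
  rw [Finset.sum_apply]
  refine Finset.sum_congr rfl fun w _ => ?_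
  rw [Finset.sum_apply]
  exact Finset.sum_congr rfl fun α _ => rfl

/-- `rowEval` as a linear map in the (truncated) coefficients. -/
def Lmap (d : ℕ) (X : Tuple g n) (v : Fin δ × Fin n → ℝ) :
    ((k : Fin (d+1)) → (Fin (k : ℕ) → Fin g) → Fin δ → ℝ) →ₗ[ℝ] (Fin n → ℝ) where
  toFun q := rowEval d (truncQ q) X v
  map_add' q1 q2 := by
    funext i
    show rowEval d (truncQ (q1 + q2)) X v i =
      rowEval d (truncQ q1) X v i + rowEval d (truncQ q2) X v i
    rw [rowEval_apply, rowEval_apply, rowEval_apply, ← Finset.sum_add_distrib]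
    refine Finset.sum_congr rfl fun k hk => ?_
    rw [← Finset.sum_add_distrib]
    refine Finset.sum_congr rfl fun w _ => ?_
    rw [← Finset.sum_add_distrib]
    refine Finset.sum_congr rfl fun α _ => ?_
    have hklt : k < d + 1 := Finset.mem_range.1 hk
    have h1 : truncQ (q1 + q2) k w α = truncQ q1 k w α + truncQ q2 k w α := by
      unfold truncQ
      rw [dif_pos hklt, dif_pos hklt, dif_pos hklt]
      rfl
    rw [h1, add_mul]
  map_smul' c q := by
    funext i
    show rowEval d (truncQ (c • q)) X v i = c • rowEval d (truncQ q) X v i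
    rw [rowEval_apply, rowEval_apply, Finset.smul_sum]
    refine Finset.sum_congr rfl fun k hk => ?_
    rw [Finset.smul_sum]
    refine Finset.sum_congr rfl fun w _ => ?_
    rw [Finset.smul_sum]
    refine Finset.sum_congr rfl fun α _ => ?_
    have hklt : k < d + 1 := Finset.mem_range.1 hk
    have h1 : truncQ (c • q) k w α = c * truncQ q k w α := by
      unfold truncQ
      rw [dif_pos hklt, dif_pos hklt]
      rfl
    rw [h1, smul_eq_mul, mul_assoc]

lemma rowSpace_eq_range (X : Tuple g n) (v : Fin δ × Fin n → ℝ) :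
    rowSpace d X v = ↑(LinearMap.range (Lmap d X v)) := by
  ext u
  constructor
  · rintro ⟨q, rfl⟩
    refine ⟨fun k => q (k : ℕ), ?_⟩
    show rowEval d (truncQ fun k => q (k : ℕ)) X v = rowEval d q X v
    funext i
    rw [rowEval_apply, rowEval_apply]
    refine Finset.sum_congr rfl fun k hk => ?_
    refine Finset.sum_congr rfl fun w _ => ?_
    refine Finset.sum_congr rfl fun α _ => ?_
    have hklt : k < d + 1 := Finset.mem_range.1 hk
    have : truncQ (fun k : Fin (d+1) => q (k : ℕ)) k w α = q k w α := by
      unfold truncQ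
      rw [dif_pos hklt]
    rw [this]
  · rintro ⟨q, rfl⟩
    exact ⟨truncQ q, rfl⟩

lemma finrank_domain_eq (g d δ : ℕ) :
    Module.finrank ℝ ((k : Fin (d+1)) → (Fin (k : ℕ) → Fin g) → Fin δ → ℝ) =
      δ * ∑ j ∈ Finset.range (d + 1), g ^ j := by
  rw [Module.finrank_pi_fintype ℝ]
  have h1 : ∀ k : Fin (d+1),
      Module.finrank ℝ ((Fin (k : ℕ) → Fin g) → Fin δ → ℝ) = g ^ (k : ℕ) * δ := by
    intro k
    rw [Module.finrank_pi_fintype ℝ]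
    have : ∀ w : Fin (k : ℕ) → Fin g, Module.finrank ℝ (Fin δ → ℝ) = δ := by
      intro w
      rw [Module.finrank_pi ℝ, Fintype.card_fin]
    rw [Finset.sum_congr rfl fun w _ => this w, Finset.sum_const, Finset.card_univ,
      Fintype.card_fun, Fintype.card_fin, Fintype.card_fin, smul_eq_mul]
  rw [Finset.sum_congr rfl fun k _ => h1 k]
  rw [Fin.sum_univ_eq_sum_range (fun k => g ^ k * δ) (d+1)]
  rw [← Finset.sum_mul, mul_comm]

end E

section F
variable {g d δ n : ℕ}

/-- The subspace `ℳ` inside Euclidean space. -/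
def MMsub (d : ℕ) (X : Tuple g n) (v : Fin δ × Fin n → ℝ) :
    Submodule ℝ (EuclideanSpace ℝ (Fin n)) :=
  LinearMap.range
    ((WithLp.linearEquiv 2 ℝ (Fin n → ℝ)).symm.toLinearMap ∘ₗ Lmap d X v)

/-- The isometry matrix whose columns are an orthonormal basis of `ℳ`. -/
def Vmat (d : ℕ) (X : Tuple g n) (v : Fin δ × Fin n → ℝ) :
    Matrix (Fin n) (Fin (Module.finrank ℝ (MMsub d X v))) ℝ :=
  fun r a => (stdOrthonormalBasis ℝ (MMsub d X v) a : EuclideanSpace ℝ (Fin n)) r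

lemma finrank_MMsub_le (X : Tuple g n) (v : Fin δ × Fin n → ℝ) :
    Module.finrank ℝ (MMsub d X v) ≤ δ * ∑ j ∈ Finset.range (d + 1), g ^ j := by
  refine le_trans (LinearMap.finrank_range_le _) ?_
  exact le_of_eq (finrank_domain_eq g d δ)

lemma Vmat_isometry (X : Tuple g n) (v : Fin δ × Fin n → ℝ) :
    (Vmat d X v)ᵀ * Vmat d X v = 1 := by
  ext a b
  rw [Matrix.mul_apply, Matrix.one_apply]
  have h := (stdOrthonormalBasis ℝ (MMsub d X v)).orthonormal
  rw [orthonormal_iff_ite] at h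
  have h2 := h a b
  rw [Submodule.coe_inner, PiLp.inner_apply] at h2
  simp only [RCLike.inner_apply, starRingEnd_apply, star_trivial] at h2
  simpa [Vmat, Matrix.transpose_apply, mul_comm] using h2

lemma rowSpace_iff_mulVec (X : Tuple g n) (v : Fin δ × Fin n → ℝ) (u : Fin n → ℝ) :
    u ∈ rowSpace d X v ↔ ∃ c, u = (Vmat d X v).mulVec c := by
  set b := stdOrthonormalBasis ℝ (MMsub d X v) with hb
  set esymm := (WithLp.linearEquiv 2 ℝ (Fin n → ℝ)).symm.toLinearMap with he
  constructor
  · intro hu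
    rw [rowSpace_eq_range] at hu
    obtain ⟨q, hq⟩ := hu
    have hx : esymm u ∈ MMsub d X v := ⟨q, by rw [LinearMap.comp_apply, hq]⟩
    set x : MMsub d X v := ⟨esymm u, hx⟩ with hxdef
    refine ⟨fun a => b.repr x a, ?_⟩
    funext r
    have hsum := b.sum_repr x
    have hcoe := congrArg (Submodule.subtype (MMsub d X v)) hsum
    rw [map_sum] at hcoe
    have hproj := congrArg (EuclideanSpace.proj (𝕜 := ℝ) r) hcoe
    rw [map_sum] at hproj
    have hL : ∀ a, EuclideanSpace.proj (𝕜 := ℝ) r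
        ((Submodule.subtype (MMsub d X v)) (b.repr x a • b a)) =
        b.repr x a * Vmat d X v r a := by
      intro a
      rw [_root_.map_smul, _root_.map_smul]
      rfl
    rw [Finset.sum_congr rfl fun a _ => hL a] at hproj
    have hur : EuclideanSpace.proj (𝕜 := ℝ) r ((Submodule.subtype (MMsub d X v)) x) = u r := rfl
    rw [hur] at hproj
    rw [← hproj, Matrix.mulVec, dotProduct]
    exact Finset.sum_congr rfl fun a _ => mul_comm _ _
  · rintro ⟨c, rfl⟩
    set y : MMsub d X v := ∑ a, c a • b a with hy
    obtain ⟨q, hq⟩ := y.2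
    rw [rowSpace_eq_range]
    refine ⟨q, ?_⟩
    show Lmap d X v q = (Vmat d X v).mulVec c
    funext r
    have h1 : EuclideanSpace.proj (𝕜 := ℝ) r (esymm (Lmap d X v q)) = Lmap d X v q r := rfl
    rw [← h1]
    have h2 : esymm (Lmap d X v q) = (y : EuclideanSpace ℝ (Fin n)) := hq
    rw [h2, hy]
    have hcoe : ((∑ a, c a • b a : MMsub d X v) : EuclideanSpace ℝ (Fin n)) =
        ∑ a, c a • (b a : EuclideanSpace ℝ (Fin n)) := by
      show (MMsub d X v).subtype (∑ a, c a • b a) = _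
      rw [map_sum]
      exact Finset.sum_congr rfl fun a _ => by rw [_root_.map_smul]; rfl
    rw [hcoe, map_sum]
    have hL : ∀ a, EuclideanSpace.proj (𝕜 := ℝ) r (c a • (b a : EuclideanSpace ℝ (Fin n))) =
        c a * Vmat d X v r a := by
      intro a
      rw [_root_.map_smul]
      rfl
    rw [Finset.sum_congr rfl fun a _ => hL a, Matrix.mulVec, dotProduct]
    exact Finset.sum_congr rfl fun a _ => mul_comm _ _

lemma VVt_fix (X : Tuple g n) (v : Fin δ × Fin n → ℝ) {u : Fin n → ℝ}
    (hu : u ∈ rowSpace d X v) :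
    (Vmat d X v).mulVec ((Vmat d X v)ᵀ.mulVec u) = u := by
  obtain ⟨c, rfl⟩ := (rowSpace_iff_mulVec X v u).1 hu
  rw [Matrix.mulVec_mulVec, Matrix.mulVec_mulVec, Matrix.mul_assoc, Vmat_isometry,
    Matrix.mul_one]

end F

section G
variable {g d δ n : ℕ}

lemma word_mem_rowSpace (X : Tuple g n) (v : Fin δ × Fin n → ℝ) {ℓ : ℕ} (hℓ : ℓ ≤ d)
    (w : Fin ℓ → Fin g) (α : Fin δ) :
    (wordEval X w).mulVec (fun i => v (α, i)) ∈ rowSpace d X v := by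
  classical
  refine ⟨fun k w' β => if h : ℓ = k then
      (if ((fun i => w' (Fin.cast h i)) = w ∧ β = α) then (1:ℝ) else 0) else 0, ?_⟩
  funext i
  rw [rowEval_apply]
  rw [Finset.sum_eq_single_of_mem ℓ (Finset.mem_range.2 (Nat.lt_succ_of_le hℓ))]
  · rw [Finset.sum_eq_single_of_mem w (Finset.mem_univ w)]
    · rw [Finset.sum_eq_single_of_mem α (Finset.mem_univ α)]
      · rw [dif_pos rfl, if_pos ⟨rfl, rfl⟩, one_mul]
      · intro β _ hβ
        rw [dif_pos rfl, if_neg (fun hc => hβ hc.2), zero_mul]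
    · intro w' _ hw'
      apply Finset.sum_eq_zero
      intro β _
      rw [dif_pos rfl, if_neg (fun hc => hw' hc.1), zero_mul]
  · intro k _ hk
    apply Finset.sum_eq_zero
    intro w' _
    apply Finset.sum_eq_zero
    intro β _
    rw [dif_neg (fun hc => hk hc.symm), zero_mul]

lemma const_mem_rowSpace (X : Tuple g n) (v : Fin δ × Fin n → ℝ) (α : Fin δ) :
    (fun i => v (α, i)) ∈ rowSpace d X v := by
  have h := word_mem_rowSpace X v (Nat.zero_le d) (fun i : Fin 0 => i.elim0) α
  rwa [wordEval_nil, Matrix.one_mulVec] at h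

lemma word_compress (X : Tuple g n) (v : Fin δ × Fin n → ℝ) :
    ∀ {ℓ : ℕ} (w : Fin ℓ → Fin g), ℓ ≤ d → ∀ α : Fin δ,
    (wordEval (fun j => (Vmat d X v)ᵀ * X j * Vmat d X v) w).mulVec
        ((Vmat d X v)ᵀ.mulVec (fun i => v (α, i)))
      = (Vmat d X v)ᵀ.mulVec ((wordEval X w).mulVec (fun i => v (α, i))) := by
  intro ℓ
  induction ℓ with
  | zero =>
      intro w _ α
      rw [wordEval_nil, wordEval_nil, Matrix.one_mulVec, Matrix.one_mulVec]
  | succ m ih =>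
      intro w hw α
      have hm : m ≤ d := le_trans (Nat.le_succ m) hw
      set V := Vmat d X v with hVdef
      set y := (wordEval X fun i => w i.succ).mulVec (fun i => v (α, i)) with hy
      have hymem : y ∈ rowSpace d X v := word_mem_rowSpace X v hm _ α
      have hfix := VVt_fix X v hymem
      rw [wordEval_succ, wordEval_succ]
      calc ((Vᵀ * X (w 0) * V) * wordEval (fun j => Vᵀ * X j * V) (fun i => w i.succ)) *ᵥ
              (Vᵀ *ᵥ (fun i => v (α, i)))
          = (Vᵀ * X (w 0) * V) *ᵥ
              ((wordEval (fun j => Vᵀ * X j * V) (fun i => w i.succ)) *ᵥ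
                (Vᵀ *ᵥ (fun i => v (α, i)))) := (Matrix.mulVec_mulVec _ _ _).symm
        _ = (Vᵀ * X (w 0) * V) *ᵥ (Vᵀ *ᵥ y) := by rw [ih (fun i => w i.succ) hm α]
        _ = (Vᵀ * X (w 0)) *ᵥ (V *ᵥ (Vᵀ *ᵥ y)) := (Matrix.mulVec_mulVec _ _ _).symm
        _ = (Vᵀ * X (w 0)) *ᵥ y := by rw [hVdef, hfix]
        _ = Vᵀ *ᵥ (X (w 0) *ᵥ y) := (Matrix.mulVec_mulVec _ _ _).symm
        _ = Vᵀ *ᵥ ((X (w 0) * wordEval X (fun i => w i.succ)) *ᵥ (fun i => v (α, i))) := by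
              rw [hy]
              simp only [Matrix.mulVec_mulVec, Matrix.mul_assoc]

end G

section H
variable {g d δ : ℕ}

lemma eval_mulVec_apply (p : NCPoly g d δ) {m : ℕ} (X : Tuple g m)
    (u : Fin δ × Fin m → ℝ) (α : Fin δ) (i : Fin m) :
    (p.eval X).mulVec u (α, i) =
      ∑ k ∈ Finset.range (d + 1), ∑ w : Fin k → Fin g, ∑ β : Fin δ,
        p.coeff k w α β * ((wordEval X w).mulVec (fun r => u (β, r)) i) := by
  have hentry : ∀ y, p.eval X (α, i) y =
      ∑ k ∈ Finset.range (d + 1), ∑ w : Fin k → Fin g,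
        Matrix.kroneckerMap (· * ·) (p.coeff k w) (wordEval X w) (α, i) y := by
    intro y
    simp only [NCPoly.eval, Matrix.sum_apply]
  show (∑ y, p.eval X (α, i) y * u y) = _
  rw [Finset.sum_congr rfl fun y _ => by rw [hentry y, Finset.sum_mul]]
  rw [Finset.sum_comm]
  refine Finset.sum_congr rfl fun k _ => ?_
  rw [Finset.sum_congr rfl fun y (_ : y ∈ (Finset.univ : Finset (Fin δ × Fin m))) =>
    Finset.sum_mul _ _ _]
  rw [Finset.sum_comm]
  refine Finset.sum_congr rfl fun w _ => ?_
  rw [Fintype.sum_prod_type]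
  refine Finset.sum_congr rfl fun β _ => ?_
  show (∑ r : Fin m, p.coeff k w α β * wordEval X w i r * u (β, r)) =
    p.coeff k w α β * ∑ r : Fin m, wordEval X w i r * u (β, r)
  rw [Finset.mul_sum]
  exact Finset.sum_congr rfl fun r _ => mul_assoc _ _ _

lemma sum_swap4 {n : ℕ} (s : Finset ℕ) (f : (k : ℕ) → (Fin k → Fin g) → Fin δ → Fin n → ℝ) :
    (∑ k ∈ s, ∑ w : Fin k → Fin g, ∑ β : Fin δ, ∑ r : Fin n, f k w β r) =
      ∑ r : Fin n, ∑ k ∈ s, ∑ w : Fin k → Fin g, ∑ β : Fin δ, f k w β r :=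
  calc (∑ k ∈ s, ∑ w : Fin k → Fin g, ∑ β : Fin δ, ∑ r : Fin n, f k w β r)
      = ∑ k ∈ s, ∑ w : Fin k → Fin g, ∑ r : Fin n, ∑ β : Fin δ, f k w β r :=
        Finset.sum_congr rfl fun k _ => Finset.sum_congr rfl fun w _ => Finset.sum_comm
    _ = ∑ k ∈ s, ∑ r : Fin n, ∑ w : Fin k → Fin g, ∑ β : Fin δ, f k w β r :=
        Finset.sum_congr rfl fun k _ => Finset.sum_comm
    _ = ∑ r : Fin n, ∑ k ∈ s, ∑ w : Fin k → Fin g, ∑ β : Fin δ, f k w β r := Finset.sum_comm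

lemma eval_compressed_kernel (p : NCPoly g d δ) {n : ℕ} (X : Tuple g n)
    (v : Fin δ × Fin n → ℝ) (hker : (p.eval X).mulVec v = 0) :
    (p.eval (fun j => (Vmat d X v)ᵀ * X j * Vmat d X v)).mulVec
        (fun q => ∑ r, Vmat d X v r q.2 * v (q.1, r)) = 0 := by
  set V := Vmat d X v with hVdef
  set vtil : Fin δ × Fin (Module.finrank ℝ (MMsub d X v)) → ℝ :=
    fun q => ∑ r, V r q.2 * v (q.1, r) with hvtil
  have hvt : ∀ β, (fun r' => vtil (β, r')) = Vᵀ.mulVec (fun i => v (β, i)) := by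
    intro β
    funext q
    show (∑ r, V r q * v (β, r)) = ∑ r, Vᵀ q r * v (β, r)
    rfl
  funext x
  obtain ⟨α, t⟩ := x
  rw [eval_mulVec_apply]
  have hstep : ∀ k ∈ Finset.range (d+1), ∀ w : Fin k → Fin g, ∀ β : Fin δ,
      ((wordEval (fun j => Vᵀ * X j * V) w).mulVec (fun r => vtil (β, r)) t) =
      (Vᵀ.mulVec ((wordEval X w).mulVec (fun i => v (β, i)))) t := by
    intro k hk w β
    rw [hvt β, hVdef]
    rw [word_compress X v w (Nat.lt_succ_iff.1 (Finset.mem_range.1 hk)) β]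
  rw [Finset.sum_congr rfl fun k hk => Finset.sum_congr rfl fun w _ =>
    Finset.sum_congr rfl fun β _ => by rw [hstep k hk w β]]
  have hexp : ∀ k (w : Fin k → Fin g) (β : Fin δ),
      p.coeff k w α β * (Vᵀ.mulVec ((wordEval X w).mulVec (fun i => v (β, i)))) t =
      ∑ r : Fin n, Vᵀ t r * (p.coeff k w α β * ((wordEval X w).mulVec (fun i => v (β, i)) r)) := by
    intro k w β
    show p.coeff k w α β * (∑ r, Vᵀ t r * _) = _
    rw [Finset.mul_sum]
    exact Finset.sum_congr rfl fun r _ => by ring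
  rw [Finset.sum_congr rfl fun k _ => Finset.sum_congr rfl fun w _ =>
    Finset.sum_congr rfl fun β _ => hexp k w β]
  rw [sum_swap4]
  have hz : ∀ r : Fin n, (∑ k ∈ Finset.range (d+1), ∑ w : Fin k → Fin g, ∑ β : Fin δ,
      Vᵀ t r * (p.coeff k w α β * ((wordEval X w).mulVec (fun i => v (β, i)) r))) =
      Vᵀ t r * ((p.eval X).mulVec v (α, r)) := by
    intro r
    rw [eval_mulVec_apply]
    rw [Finset.mul_sum]
    refine Finset.sum_congr rfl fun k _ => ?_
    rw [Finset.mul_sum]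
    refine Finset.sum_congr rfl fun w _ => ?_
    rw [Finset.mul_sum]
  rw [Finset.sum_congr rfl fun r _ => hz r]
  have : ∀ r : Fin n, (p.eval X).mulVec v (α, r) = 0 := by
    intro r
    rw [hker]
    rfl
  rw [Finset.sum_congr rfl fun r _ => by rw [this r, mul_zero]]
  rw [Finset.sum_const_zero]
  rfl

lemma vtil_ne_zero {n : ℕ} (X : Tuple g n) (v : Fin δ × Fin n → ℝ) (hv : v ≠ 0) :
    (fun q : Fin δ × Fin (Module.finrank ℝ (MMsub d X v)) =>
      ∑ r, Vmat d X v r q.2 * v (q.1, r)) ≠ 0 := by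
  intro h0
  apply hv
  funext x
  obtain ⟨α, i⟩ := x
  have hVt : (Vmat d X v)ᵀ.mulVec (fun r => v (α, r)) = 0 := by
    funext q
    have := congrFun h0 (α, q)
    exact this
  have hmem := const_mem_rowSpace (d := d) X v α
  have hfix := VVt_fix X v hmem
  rw [hVt, Matrix.mulVec_zero] at hfix
  exact (congrFun hfix i).symm

end H


/-- Compression to `ℳ = {q(X)v : q ∈ 𝒫_d^δ}`: if `(X, v) ∈ ∂̂𝒟_p`, then the compressed tuple
`P_ℳ X|_ℳ` (realized as `VᵀXV` for an isometry `V : ℝ^k → ℝⁿ` onto `ℳ`, `k = dim ℳ ≤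
δ·Σ_{j=0}^d g^j`) together with (the compressed) `v` again lies in `∂̂𝒟_p`: `t·P_ℳX|_ℳ ∈ 𝒟_p`
for `0 ≤ t < 1` and `p(P_ℳX|_ℳ)v = 0`. -/
theorem compression_to_M_in_detailed_boundary
    {g d δ : ℕ} (p : NCPoly g d δ) (hsym : p.IsSymmPoly)
    (h0 : IsUnit p.constantCoeff)
    (hconv : ∀ n, Convex ℝ (Dset p n))
    (hbdd : ∃ K : ℝ, ∀ n, ∀ X ∈ Dset p n, (∑ j, ‖X j‖) ≤ K)
    {n : ℕ} (X : Tuple g n) (v : Fin δ × Fin n → ℝ) (hv : v ≠ 0)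
    (hXbd : X ∈ closure (Dset p n) \ Dset p n)
    (hker : (p.eval X).mulVec v = 0) :
    ∃ (k : ℕ) (V : Matrix (Fin n) (Fin k) ℝ),
      k ≤ δ * ∑ j ∈ Finset.range (d + 1), g ^ j ∧
      Vᵀ * V = 1 ∧
      (∀ u : Fin n → ℝ, u ∈ rowSpace d X v ↔ ∃ c : Fin k → ℝ, u = V.mulVec c) ∧
      (∀ t : ℝ, 0 ≤ t → t < 1 →
        t • (fun j => Vᵀ * X j * V : Tuple g k) ∈ Dset p k) ∧
      (p.eval (fun j => Vᵀ * X j * V : Tuple g k)).mulVec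
          (fun q => ∑ r, V r q.2 * v (q.1, r)) = 0 ∧
      (fun q : Fin δ × Fin k => ∑ r, V r q.2 * v (q.1, r)) ≠ 0 := by
  refine ⟨Module.finrank ℝ (MMsub d X v), Vmat d X v, finrank_MMsub_le X v,
    Vmat_isometry X v, fun u => rowSpace_iff_mulVec X v u, ?_, ?_, ?_⟩
  · intro t ht0 ht1
    exact compress_scale_mem_Dset p h0 (hconv n) (Vmat d X v) (Vmat_isometry X v)
      hXbd.1 ht0 ht1
  · exact eval_compressed_kernel p X v hker
  · exact vtil_ne_zero X v hv
end
end

section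
/- Let Λ : 𝕊ₙ(ℝ)^g → ℝ be a linear functional and for each ℓ = 1,…,g let B_ℓ be the unique symmetric n×n matrix with ⟨B_ℓ c, d⟩ = ½ Λ((cdᵀ + dcᵀ)·e_ℓ) for c, d ∈ ℝⁿ, where (cdᵀ + dcᵀ)·e_ℓ denotes the g-tuple with cdᵀ+dcᵀ in slot ℓ and 0 elsewhere. Then for any m, any Y ∈ 𝕊ₘ(ℝ)^g, and any vector γ = Σ_j γ_j ⊗ e_j ∈ ℝⁿ ⊗ ℝᵐ, one has ⟨(Σ_ℓ B_ℓ ⊗ Y_ℓ) γ, γ⟩ = Λ(Γ Y Γᵀ), where Γ is the n×m matrix whose j-th column is γ_j and ΓYΓᵀ = (ΓY₁Γᵀ, …, ΓY_gΓᵀ). -/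
open Matrix

noncomputable section

/-- The central Effros–Winkler identity: if `B_ℓ` is the symmetric matrix representing the
bilinear form `(c,d) ↦ ½ Λ((cdᵀ + dcᵀ)·e_ℓ)`, then for any tuple `Y` of symmetric `m × m`
matrices and any `γ = Σ_j γ_j ⊗ e_j ∈ ℝⁿ ⊗ ℝᵐ`,
`⟨(Σ_ℓ B_ℓ ⊗ Y_ℓ)γ, γ⟩ = Λ(ΓYΓᵀ)` where `Γ` has `j`-th column `γ_j`. -/
theorem effros_winkler_pencil_identity
    {g n : ℕ} (Λ : (Fin g → Matrix (Fin n) (Fin n) ℝ) →ₗ[ℝ] ℝ)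
    (B : Fin g → Matrix (Fin n) (Fin n) ℝ) (hBsym : ∀ ℓ, (B ℓ).IsSymm)
    (hB : ∀ (ℓ : Fin g) (c d : Fin n → ℝ),
      (B ℓ).mulVec c ⬝ᵥ d
        = (1 / 2 : ℝ) * Λ (Pi.single ℓ (Matrix.vecMulVec c d + Matrix.vecMulVec d c))) :
    ∀ (m : ℕ) (Y : Fin g → Matrix (Fin m) (Fin m) ℝ), (∀ ℓ, (Y ℓ).IsSymm) →
      ∀ γ : Fin n × Fin m → ℝ,
        (∑ ℓ, Matrix.kroneckerMap (· * ·) (B ℓ) (Y ℓ)).mulVec γ ⬝ᵥ γ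
          = Λ (fun ℓ => (Matrix.of fun i j => γ (i, j)) * Y ℓ * (Matrix.of fun i j => γ (i, j))ᵀ) := by
  intro m Y hY γ
  classical
  set c : Fin m → (Fin n → ℝ) := fun j i => γ (i, j) with hc
  set L : Fin g → (Matrix (Fin n) (Fin n) ℝ →ₗ[ℝ] ℝ) :=
    fun ℓ => Λ ∘ₗ LinearMap.single ℝ (fun _ : Fin g => Matrix (Fin n) (Fin n) ℝ) ℓ with hL
  have hLB : ∀ (ℓ : Fin g) (a b : Fin n → ℝ),
      L ℓ (vecMulVec a b) + L ℓ (vecMulVec b a) = 2 * ((B ℓ).mulVec a ⬝ᵥ b) := by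
    intro ℓ a b
    rw [hB]
    simp [hL, LinearMap.single_apply, Pi.single_add, map_add]
  -- RHS as triple sum
  have hRHS : Λ (fun ℓ => (Matrix.of fun i j => γ (i, j)) * Y ℓ * (Matrix.of fun i j => γ (i, j))ᵀ)
      = ∑ ℓ, ∑ j, ∑ j', Y ℓ j j' * L ℓ (vecMulVec (c j) (c j')) := by
    have h1 : (fun ℓ => (Matrix.of fun i j => γ (i, j)) * Y ℓ * (Matrix.of fun i j => γ (i, j))ᵀ)
        = ∑ ℓ, Pi.single ℓ ((Matrix.of fun i j => γ (i, j)) * Y ℓ * (Matrix.of fun i j => γ (i, j))ᵀ) := by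
      funext ℓ'
      simp [Finset.sum_apply, Pi.single_apply]
    have h2 : ∀ ℓ : Fin g, (Matrix.of fun i j => γ (i, j)) * Y ℓ * (Matrix.of fun i j => γ (i, j))ᵀ
        = ∑ j, ∑ j', Y ℓ j j' • vecMulVec (c j) (c j') := by
      intro ℓ
      ext i i'
      simp only [Matrix.mul_apply, Matrix.transpose_apply, Matrix.of_apply,
        Matrix.sum_apply, Matrix.smul_apply, vecMulVec_apply, smul_eq_mul,
        Finset.sum_mul, hc]
      rw [Finset.sum_comm]
      refine Finset.sum_congr rfl fun j _ => Finset.sum_congr rfl fun j' _ => ?_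
      ring
    rw [h1, map_sum]
    refine Finset.sum_congr rfl fun ℓ _ => ?_
    have hLs : Λ (Pi.single ℓ ((Matrix.of fun i j => γ (i, j)) * Y ℓ * (Matrix.of fun i j => γ (i, j))ᵀ))
        = L ℓ ((Matrix.of fun i j => γ (i, j)) * Y ℓ * (Matrix.of fun i j => γ (i, j))ᵀ) := by
      simp [hL, LinearMap.single_apply]
    rw [hLs, h2, map_sum]
    refine Finset.sum_congr rfl fun j _ => ?_
    rw [map_sum]
    refine Finset.sum_congr rfl fun j' _ => ?_
    rw [LinearMap.map_smul, smul_eq_mul]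
  -- generic reordering of a quintuple sum
  have step : ∀ (F : Fin n → Fin m → Fin n → Fin m → Fin g → ℝ),
      (∑ i, ∑ j, ∑ i', ∑ j', ∑ ℓ, F i j i' j' ℓ)
        = ∑ ℓ, ∑ j, ∑ j', ∑ i, ∑ i', F i j i' j' ℓ := by
    intro F
    calc (∑ i, ∑ j, ∑ i', ∑ j', ∑ ℓ, F i j i' j' ℓ)
        = ∑ p : Fin n × Fin m × Fin n × Fin m × Fin g,
            F p.1 p.2.1 p.2.2.1 p.2.2.2.1 p.2.2.2.2 := by
          simp [Fintype.sum_prod_type]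
      _ = ∑ q : Fin g × Fin m × Fin m × Fin n × Fin n,
            F q.2.2.2.1 q.2.1 q.2.2.2.2 q.2.2.1 q.1 :=
          Fintype.sum_equiv
            ⟨fun p => (p.2.2.2.2, p.2.1, p.2.2.2.1, p.1, p.2.2.1),
             fun q => (q.2.2.2.1, q.2.1, q.2.2.2.2, q.2.2.1, q.1),
             fun _ => rfl, fun _ => rfl⟩ _ _ (fun p => rfl)
      _ = ∑ ℓ, ∑ j, ∑ j', ∑ i, ∑ i', F i j i' j' ℓ := by
          simp [Fintype.sum_prod_type]
  -- LHS as triple sum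
  have hLHS : (∑ ℓ, Matrix.kroneckerMap (· * ·) (B ℓ) (Y ℓ)).mulVec γ ⬝ᵥ γ
      = ∑ ℓ, ∑ j, ∑ j', Y ℓ j j' * ((B ℓ).mulVec (c j') ⬝ᵥ (c j)) := by
    simp only [Matrix.mulVec, dotProduct, Matrix.sum_apply, Matrix.kroneckerMap_apply,
      Finset.sum_mul, Finset.mul_sum, Fintype.sum_prod_type, hc]
    rw [step (fun i j i' j' ℓ => B ℓ i i' * Y ℓ j j' * γ (i', j') * γ (i, j))]
    refine Finset.sum_congr rfl fun ℓ _ => Finset.sum_congr rfl fun j _ =>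
      Finset.sum_congr rfl fun j' _ => Finset.sum_congr rfl fun i _ =>
      Finset.sum_congr rfl fun i' _ => ?_
    ring
  rw [hLHS, hRHS]
  refine Finset.sum_congr rfl fun ℓ _ => ?_
  have key : ∀ j j' : Fin m, Y ℓ j j' * ((B ℓ).mulVec (c j') ⬝ᵥ (c j))
      = (1/2 : ℝ) * (Y ℓ j j' * L ℓ (vecMulVec (c j') (c j)))
        + (1/2 : ℝ) * (Y ℓ j j' * L ℓ (vecMulVec (c j) (c j'))) := by
    intro j j'
    have h := hLB ℓ (c j') (c j)
    linear_combination (-(Y ℓ j j') / 2) * h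
  have hswap : (∑ j, ∑ j', (1/2 : ℝ) * (Y ℓ j j' * L ℓ (vecMulVec (c j') (c j))))
      = ∑ j, ∑ j', (1/2 : ℝ) * (Y ℓ j j' * L ℓ (vecMulVec (c j) (c j'))) := by
    rw [Finset.sum_comm]
    refine Finset.sum_congr rfl fun j _ => Finset.sum_congr rfl fun j' _ => ?_
    rw [(hY ℓ).apply]
  calc ∑ j, ∑ j', Y ℓ j j' * ((B ℓ).mulVec (c j') ⬝ᵥ (c j))
      = (∑ j, ∑ j', (1/2 : ℝ) * (Y ℓ j j' * L ℓ (vecMulVec (c j') (c j))))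
        + ∑ j, ∑ j', (1/2 : ℝ) * (Y ℓ j j' * L ℓ (vecMulVec (c j) (c j'))) := by
        rw [← Finset.sum_add_distrib]
        refine Finset.sum_congr rfl fun j _ => ?_
        rw [← Finset.sum_add_distrib]
        refine Finset.sum_congr rfl fun j' _ => ?_
        exact key j j'
    _ = ∑ j, ∑ j', Y ℓ j j' * L ℓ (vecMulVec (c j) (c j')) := by
        rw [hswap, ← Finset.sum_add_distrib]
        refine Finset.sum_congr rfl fun j _ => ?_
        rw [← Finset.sum_add_distrib]
        refine Finset.sum_congr rfl fun j' _ => ?_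
        ring
end
end
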